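/- arXiv:2303.00235 — 5 statements merged into one kernel-verified Lean document; each statement's English description precedes it below -/
import Mathlib

section
/- Let F be a finite field with |F| = q and let g ∈ F with g ≠ 2 and g ≠ −2. Then the equation X² + gXY + Y² = −1 has a solution (s, s′) ∈ F × F. Moreover, there exists a solution (s, s′) with s′ = 0 if and only if q is even or 4 divides q − 1. -/
/-- Let `F` be a finite field with `|F| = q` and let `g ∈ F` with `g ≠ 2`
and `g ≠ −2`. Then the equation `X² + gXY + Y² = −1` has a solution `(s, s′) ∈ F × F`;
moreover, there exists a solution `(s, s′)` with `s′ = 0` if and only if `q` is even or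
`4 ∣ q − 1`. -/
theorem consta_dihedral_stmt0 {F : Type*} [Field F] [Fintype F] (q : ℕ)
    (hq : q = Fintype.card F) (g : F) (hg : g ≠ 2) (hg' : g ≠ -2) :
    (∃ s s' : F, s ^ 2 + g * s * s' + s' ^ 2 = -1) ∧
    ((∃ s s' : F, s' = 0 ∧ s ^ 2 + g * s * s' + s' ^ 2 = -1) ↔ (Even q ∨ 4 ∣ q - 1)) := by
  have hcardpos : 0 < q := hq ▸ Fintype.card_pos
  constructor
  · by_cases h2 : ringChar F = 2
    · haveI : CharP F 2 := h2 ▸ ringChar.charP F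
      refine ⟨1, 0, ?_⟩
      rw [CharTwo.neg_eq]
      ring
    · -- char ≠ 2: complete the square
      have h2' : (2 : F) ≠ 0 := Ring.two_ne_zero h2
      have h4' : (4 : F) ≠ 0 := by
        intro h
        apply h2'
        have : (2 : F) * 2 = 0 := by rw [show (2:F)*2 = 4 by norm_num, h]
        rcases mul_eq_zero.mp this with h | h <;> exact h
      set c : F := 1 - g ^ 2 / 4 with hc
      have hc0 : c ≠ 0 := by
        intro h
        have h4c : (g - 2) * (g + 2) = -(4 * c) := by
          rw [hc]; field_simp; ring
        rw [h, mul_zero, neg_zero, mul_eq_zero] at h4c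
        rcases h4c with h' | h'
        · exact hg (by linear_combination h')
        · exact hg' (by linear_combination h')
      have hodd : Fintype.card F % 2 = 1 :=
        FiniteField.odd_card_of_char_ne_two h2
      obtain ⟨a, b, hab⟩ :=
        FiniteField.exists_root_sum_quadratic
          (f := Polynomial.X ^ 2)
          (g := Polynomial.C c * Polynomial.X ^ 2 + Polynomial.C 0 * Polynomial.X
            + Polynomial.C 1)
          (Polynomial.degree_X_pow 2) (Polynomial.degree_quadratic hc0) hodd
      simp only [Polynomial.eval_add, Polynomial.eval_mul, Polynomial.eval_pow,
        Polynomial.eval_X, Polynomial.eval_C, map_zero, zero_mul, Polynomial.eval_zero, add_zero] at hab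
      refine ⟨a - g * b / 2, b, ?_⟩
      have : a ^ 2 + c * b ^ 2 = -1 := by linear_combination hab
      field_simp [hc] at this ⊢
      rw [hc] at this
      field_simp at this
      linear_combination this
  · constructor
    · rintro ⟨s, s', rfl, h⟩
      have hsq : IsSquare (-1 : F) := ⟨s, by linear_combination -h⟩
      have := FiniteField.isSquare_neg_one_iff.mp hsq
      rw [← hq] at this
      rw [Nat.even_iff]
      omega
    · intro h
      have hmod : q % 4 ≠ 3 := by
        rw [Nat.even_iff] at h
        omega
      rw [hq] at hmod
      obtain ⟨r, hr⟩ := FiniteField.isSquare_neg_one_iff.mpr hmod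
      exact ⟨r, 0, rfl, by rw [hr]; ring⟩
end

section
/- The element e₀ := (ε₀, 0) is a central idempotent of A_n and the left ideal A_n·e₀ = F·(ε₀,0) ⊕ F·(0,ε₀) has F-dimension 2. Moreover: (1) if q is odd and 4 does not divide q − 1, then for every nonzero a ∈ A_n·e₀ there exists b ∈ A_n·e₀ with a·b = e₀, i.e. A_n·e₀ is a field with identity e₀, a degree-2 field extension of F ≅ F[X]/(X²+1); (2) if q is even or 4 divides q − 1, then there exists r ∈ F with r² = −1, and C₀ := A_n·(rε₀, ε₀) is a 1-dimensional left ideal of A_n with ⟨C₀, C₀⟩ = 0. -/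
open Polynomial

noncomputable section

namespace CDC

lemma natDegree_eq {F : Type*} [Field F] {n : ℕ} (h : (X ^ n - 1 : F[X]) ≠ 0) :
    (X ^ n - 1 : F[X]).natDegree = n := by
  rcases Nat.eq_zero_or_pos n with h0 | h0
  · subst h0; simp at h
  · have := Polynomial.natDegree_X_pow_sub_C (n := n) (r := (1 : F))
    simpa using this

open scoped Classical in
/-- coordinates of an element of `F[X]/(Xⁿ−1)` w.r.t. the basis `1, x, …, x^{n−1}`. -/
def coords {F : Type*} [Field F] {n : ℕ} (a : AdjoinRoot (X ^ n - 1 : F[X])) (i : Fin n) : F :=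
  if h : (X ^ n - 1 : F[X]) ≠ 0 then
    (AdjoinRoot.powerBasis h).basis.repr a (Fin.cast (natDegree_eq h).symm i)
  else 0

/-- Euclidean inner product on `A_n = R_n × R_n` w.r.t. the basis
`(xⁱ,0), (0,xⁱ)`, `0 ≤ i < n`. -/
def innerA {F : Type*} [Field F] {n : ℕ}
    (c d : AdjoinRoot (X ^ n - 1 : F[X]) × AdjoinRoot (X ^ n - 1 : F[X])) : F :=
  ∑ i : Fin n, coords c.1 i * coords d.1 i + ∑ i : Fin n, coords c.2 i * coords d.2 i

/-- the consta-dihedral multiplication `(a,b)·(c,d) = (ac − b·σ(d), ad + b·σ(c))`. -/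
def cdMul {R : Type*} [CommRing R] (σ : R → R) (z w : R × R) : R × R :=
  (z.1 * w.1 - z.2 * σ w.2, z.1 * w.2 + z.2 * σ w.1)

/-- `ε₀ = n⁻¹(1 + x + ⋯ + x^{n−1}) ∈ R_n`. -/
def eps0 (F : Type*) [Field F] (n : ℕ) : AdjoinRoot (X ^ n - 1 : F[X]) :=
  ((n : F)⁻¹) • ∑ i ∈ Finset.range n, (AdjoinRoot.root _) ^ i

lemma coords_smul {F : Type*} [Field F] {n : ℕ} (s : F) (a : AdjoinRoot (X ^ n - 1 : F[X]))
    (i : Fin n) : coords (s • a) i = s * coords a i := by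
  classical
  unfold coords
  split_ifs with h
  · rw [map_smul, Finsupp.smul_apply, smul_eq_mul]
  · ring

set_option maxHeartbeats 1000000

/-- `e₀ := (ε₀, 0)` is a central idempotent of `A_n` and the left ideal
`A_n·e₀ = F·(ε₀,0) ⊕ F·(0,ε₀)` has `F`-dimension 2. Moreover: (1) if `q` is odd and
`4 ∤ q − 1` then every nonzero element of `A_n·e₀` has an inverse relative to the
identity `e₀`, i.e. `A_n e₀` is a field; (2) if `q` is even or `4 ∣ q − 1` then there is
`r ∈ F` with `r² = −1` such that `C₀ := A_n·(rε₀, ε₀)` is a 1-dimensional left ideal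
with `⟨C₀, C₀⟩ = 0`. -/
theorem consta_dihedral_stmt2 {F : Type*} [Field F] [Fintype F] (q : ℕ)
    (hq : q = Fintype.card F) (n : ℕ) (hn : 1 < n) (hodd : Odd n)
    (hcop : Nat.Coprime n q)
    (σ : AdjoinRoot (X ^ n - 1 : F[X]) ≃ₐ[F] AdjoinRoot (X ^ n - 1 : F[X]))
    (hσ : σ (AdjoinRoot.root _) = (AdjoinRoot.root _) ^ (n - 1)) :
    (cdMul (⇑σ) (eps0 F n, 0) (eps0 F n, 0) = (eps0 F n, 0) ∧
      ∀ z, cdMul (⇑σ) (eps0 F n, 0) z = cdMul (⇑σ) z (eps0 F n, 0)) ∧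
    (Set.range fun z => cdMul (⇑σ) z (eps0 F n, 0))
      = (Submodule.span F {(eps0 F n, (0 : AdjoinRoot (X ^ n - 1 : F[X]))),
          ((0 : AdjoinRoot (X ^ n - 1 : F[X])), eps0 F n)} : Set _) ∧
    Module.finrank F (Submodule.span F {(eps0 F n, (0 : AdjoinRoot (X ^ n - 1 : F[X]))),
          ((0 : AdjoinRoot (X ^ n - 1 : F[X])), eps0 F n)}) = 2 ∧
    ((Odd q ∧ ¬ 4 ∣ q - 1) →
      (∀ a ∈ Set.range fun z => cdMul (⇑σ) z (eps0 F n, 0), a ≠ 0 →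
        ∃ b ∈ Set.range fun z => cdMul (⇑σ) z (eps0 F n, 0),
          cdMul (⇑σ) a b = (eps0 F n, 0)) ∧
      -- `A_n e₀` is a degree-2 field extension of `F`, isomorphic to `F[X]/(X²+1)`
      ∃ Ψ : (F[X] ⧸ Ideal.span {(X : F[X]) ^ 2 + 1})
          →ₗ[F] AdjoinRoot (X ^ n - 1 : F[X]) × AdjoinRoot (X ^ n - 1 : F[X]),
        Function.Injective Ψ ∧ Ψ 1 = (eps0 F n, 0) ∧
        (∀ u v, Ψ (u * v) = cdMul (⇑σ) (Ψ u) (Ψ v)) ∧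
        Set.range Ψ = Set.range (fun z => cdMul (⇑σ) z (eps0 F n, 0))) ∧
    ((Even q ∨ 4 ∣ q - 1) →
      ∃ r : F, r ^ 2 = -1 ∧
        Module.finrank F
          (Submodule.span F (Set.range fun z => cdMul (⇑σ) z (r • eps0 F n, eps0 F n))) = 1 ∧
        ∀ c d, (c ∈ Set.range fun z => cdMul (⇑σ) z (r • eps0 F n, eps0 F n)) →
          (d ∈ Set.range fun z => cdMul (⇑σ) z (r • eps0 F n, eps0 F n)) →
          innerA c d = 0) := by
  set R := AdjoinRoot (X ^ n - 1 : F[X]) with hR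
  -- n ≠ 0 in F
  have hnF : (n : F) ≠ 0 := by
    intro h
    have hp : (ringChar F) ∣ n := (CharP.cast_eq_zero_iff F (ringChar F) n).mp h
    have hq0 : ((q : ℕ) : F) = 0 := by rw [hq]; exact FiniteField.cast_card_eq_zero F
    have hpq : (ringChar F) ∣ q := (CharP.cast_eq_zero_iff F (ringChar F) q).mp hq0
    have hd1 : (ringChar F) ∣ 1 := hcop ▸ Nat.dvd_gcd hp hpq
    have hprime : (ringChar F).Prime := CharP.char_is_prime F (ringChar F)
    have h1 := Nat.le_of_dvd one_pos hd1
    have h2 := hprime.one_lt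
    omega
  have hfne : (X ^ n - 1 : F[X]) ≠ 0 := by
    simpa using X_pow_sub_C_ne_zero (by omega : 0 < n) (1 : F)
  -- root^n = 1
  have hxn : (AdjoinRoot.root (X ^ n - 1 : F[X])) ^ n = 1 := by
    have h0 : AdjoinRoot.mk (X ^ n - 1 : F[X]) (X ^ n - 1) = 0 := AdjoinRoot.mk_self
    have : (AdjoinRoot.root (X ^ n - 1 : F[X])) ^ n - 1 = 0 := by
      simpa [map_sub, map_pow] using h0
    exact sub_eq_zero.mp this
  -- evaluation-at-1 ring hom
  have heval : eval₂ (RingHom.id F) 1 (X ^ n - 1 : F[X]) = 0 := by simp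
  set φ : AdjoinRoot (X ^ n - 1 : F[X]) →+* F := AdjoinRoot.lift (RingHom.id F) 1 heval with hφdef
  have hφsmul : ∀ (c : F) (y : R), φ (c • y) = c * φ y := by
    intro c y
    rw [Algebra.smul_def, map_mul]
    congr 1
    rw [show (algebraMap F R) c = AdjoinRoot.of _ c from by rw [AdjoinRoot.algebraMap_eq]]
    exact AdjoinRoot.lift_of heval
  have hφroot : φ (AdjoinRoot.root _) = 1 := AdjoinRoot.lift_root heval
  have hφeps : φ (eps0 F n) = 1 := by
    rw [eps0, hφsmul, map_sum]
    simp only [map_pow, hφroot, one_pow]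
    simp [hnF]
  have heps_ne : eps0 F n ≠ 0 := by
    intro h
    rw [h, map_zero] at hφeps
    exact one_ne_zero hφeps.symm
  -- root * eps0 = eps0
  have hre : (AdjoinRoot.root (X ^ n - 1 : F[X])) * eps0 F n = eps0 F n := by
    have hg := geom_sum_mul (AdjoinRoot.root (X ^ n - 1 : F[X])) n
    rw [hxn, sub_self] at hg
    have : (∑ i ∈ Finset.range n, (AdjoinRoot.root (X ^ n - 1 : F[X])) ^ i) *
        (AdjoinRoot.root (X ^ n - 1 : F[X])) =
        ∑ i ∈ Finset.range n, (AdjoinRoot.root (X ^ n - 1 : F[X])) ^ i := by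
      rw [mul_sub, mul_one] at hg
      exact sub_eq_zero.mp hg
    rw [eps0, mul_smul_comm, mul_comm, this]
  -- root^k * eps0 = eps0
  have hrk : ∀ k : ℕ, (AdjoinRoot.root (X ^ n - 1 : F[X])) ^ k * eps0 F n = eps0 F n := by
    intro k
    induction k with
    | zero => simp
    | succ k ih => rw [pow_succ, mul_comm _ (AdjoinRoot.root _), mul_assoc, ih, hre]
  -- key : a * eps0 = φ a • eps0
  have key : ∀ a : R, a * eps0 F n = φ a • eps0 F n := by
    intro a
    obtain ⟨p, rfl⟩ := AdjoinRoot.mk_surjective a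
    induction p using Polynomial.induction_on' with
    | add p q hp hq =>
      rw [map_add, add_mul, hp, hq, map_add, add_smul]
    | monomial k c =>
      have hmk : (AdjoinRoot.mk (X ^ n - 1 : F[X])) (monomial k c)
          = (algebraMap F R c) * (AdjoinRoot.root _) ^ k := by
        rw [← Polynomial.C_mul_X_pow_eq_monomial, map_mul, map_pow, AdjoinRoot.mk_X,
          AdjoinRoot.mk_C, AdjoinRoot.algebraMap_eq]
      rw [hmk, mul_assoc, hrk, map_mul, map_pow, hφroot, one_pow, mul_one]
      rw [show φ ((algebraMap F R) c) = c from by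
        rw [show (algebraMap F R) c = AdjoinRoot.of _ c from by rw [AdjoinRoot.algebraMap_eq]]
        exact AdjoinRoot.lift_of heval]
      rw [Algebra.smul_def]
  have hidem : eps0 F n * eps0 F n = eps0 F n := by
    rw [key, hφeps, one_smul]
  -- σ fixes eps0
  have hσeps : σ (eps0 F n) = eps0 F n := by
    set f := σ (eps0 F n) with hfdef
    have hff : f * f = f := by rw [hfdef, ← map_mul, hidem]
    have hrf : (AdjoinRoot.root (X ^ n - 1 : F[X])) * f = f := by
      have h1 : (AdjoinRoot.root (X ^ n - 1 : F[X])) ^ (n-1) * eps0 F n = eps0 F n := hrk _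
      have h2 := congrArg σ h1
      rw [map_mul, map_pow, hσ, ← pow_mul] at h2
      have harith : (n - 1) * (n - 1) = (n - 2) * n + 1 := by
        obtain ⟨m, rfl⟩ : ∃ m, n = m + 2 := ⟨n - 2, by omega⟩
        simp only [show m + 2 - 1 = m + 1 from rfl, show m + 2 - 2 = m from rfl]
        ring
      rw [harith, pow_add, pow_mul', hxn, one_pow, one_mul, pow_one] at h2
      exact h2
    have hrfk : ∀ k : ℕ, (AdjoinRoot.root (X ^ n - 1 : F[X])) ^ k * f = f := by
      intro k
      induction k with
      | zero => simp
      | succ k ih => rw [pow_succ, mul_comm _ (AdjoinRoot.root _), mul_assoc, ih, hrf]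
    have hef : eps0 F n * f = f := by
      rw [eps0, smul_mul_assoc, Finset.sum_mul]
      simp only [hrfk]
      rw [Finset.sum_const, Finset.card_range, ← Nat.cast_smul_eq_nsmul F, smul_smul,
        inv_mul_cancel₀ hnF, one_smul]
    have hfe : f = φ f • eps0 F n := by
      rw [← key, mul_comm, hef]
    have hfne2 : f ≠ 0 := by
      intro h
      exact heps_ne (σ.injective (by rw [← hfdef, h, map_zero]))
    have hφf : φ f ≠ 0 := by
      intro h; rw [h, zero_smul] at hfe; exact hfne2 hfe
    have hφf1 : φ f = 1 := by
      have := hff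
      rw [hfe] at this
      rw [smul_mul_assoc, mul_smul_comm, hidem, smul_smul] at this
      have h2 : (φ f * φ f - φ f) • eps0 F n = 0 := by rw [sub_smul, this, sub_self]
      rcases smul_eq_zero.mp h2 with h3 | h3
      · have h4 : φ f * φ f = φ f * 1 := by rw [mul_one]; exact sub_eq_zero.mp h3
        exact mul_left_cancel₀ hφf h4
      · exact absurd h3 heps_ne
    rw [hfe, hφf1, one_smul]
  have hφalg : ∀ c : F, φ (algebraMap F R c) = c := by
    intro c
    rw [show (algebraMap F R) c = AdjoinRoot.of _ c from by rw [AdjoinRoot.algebraMap_eq]]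
    exact AdjoinRoot.lift_of heval
  -- description of the ideal elements
  have hmemS : ∀ z : R × R, cdMul (⇑σ) z (eps0 F n, 0) = (φ z.1 • eps0 F n, φ z.2 • eps0 F n) := by
    intro z
    simp only [cdMul, map_zero, mul_zero, sub_zero, zero_add, hσeps, key]
  have hsurjS : ∀ s t : F, cdMul (⇑σ) (algebraMap F R s, algebraMap F R t) (eps0 F n, 0)
      = (s • eps0 F n, t • eps0 F n) := by
    intro s t
    rw [hmemS]; simp [hφalg]
  -- Goal 1a : idempotent
  have goal1a : cdMul (⇑σ) (eps0 F n, 0) (eps0 F n, 0) = (eps0 F n, 0) := by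
    simp [cdMul, hidem]
  -- Goal 1b : central
  have goal1b : ∀ z : R × R, cdMul (⇑σ) (eps0 F n, 0) z = cdMul (⇑σ) z (eps0 F n, 0) := by
    intro z
    simp only [cdMul, map_zero, mul_zero, sub_zero, zero_add, zero_mul, add_zero, hσeps]
    exact Prod.ext (by ring) (by ring)
  -- Goal 2 : range = span
  have goal2 : (Set.range fun z => cdMul (⇑σ) z (eps0 F n, 0))
      = (Submodule.span F {(eps0 F n, (0 : R)), ((0 : R), eps0 F n)} : Set _) := by
    ext w
    constructor
    · rintro ⟨z, rfl⟩
      dsimp only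
      rw [hmemS]
      refine SetLike.mem_coe.mpr (Submodule.mem_span_pair.mpr ⟨φ z.1, φ z.2, ?_⟩)
      simp [Prod.smul_mk]
    · intro hw
      obtain ⟨s, t, rfl⟩ := Submodule.mem_span_pair.mp (SetLike.mem_coe.mp hw)
      exact ⟨(algebraMap F R s, algebraMap F R t), by dsimp only; rw [hsurjS]; simp [Prod.smul_mk]⟩
  -- Goal 3 : finrank = 2
  have hli : LinearIndependent F ![(eps0 F n, (0:R)), ((0:R), eps0 F n)] := by
    rw [LinearIndependent.pair_iff]
    intro s t hst
    have h1 : s • eps0 F n = 0 ∧ t • eps0 F n = 0 := by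
      constructor
      · simpa using congrArg Prod.fst hst
      · simpa using congrArg Prod.snd hst
    constructor
    · rcases smul_eq_zero.mp h1.1 with h | h
      · exact h
      · exact absurd h heps_ne
    · rcases smul_eq_zero.mp h1.2 with h | h
      · exact h
      · exact absurd h heps_ne
  have goal3 : Module.finrank F (Submodule.span F {(eps0 F n, (0 : R)), ((0 : R), eps0 F n)}) = 2 := by
    have h1 := finrank_span_eq_card hli
    have h2 : Set.range ![(eps0 F n, (0:R)), ((0:R), eps0 F n)]
        = {(eps0 F n, (0 : R)), ((0 : R), eps0 F n)} := by
      ext w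
      simp [Fin.exists_fin_two, or_comm]
    rw [h2] at h1
    simpa using h1
  -- product of two ideal elements
  have hprod : ∀ a b c d : F, cdMul (⇑σ) (a • eps0 F n, b • eps0 F n) (c • eps0 F n, d • eps0 F n)
      = ((a * c - b * d) • eps0 F n, (a * d + b * c) • eps0 F n) := by
    intro a b c d
    simp only [cdMul, map_smul, hσeps, smul_mul_smul_comm, hidem, sub_smul, add_smul]
  -- Part 1 hypotheses
  have part1 : (Odd q ∧ ¬ 4 ∣ q - 1) →
      (∀ a ∈ Set.range fun z => cdMul (⇑σ) z (eps0 F n, 0), a ≠ 0 →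
        ∃ b ∈ Set.range fun z => cdMul (⇑σ) z (eps0 F n, 0),
          cdMul (⇑σ) a b = (eps0 F n, 0)) := by
    rintro ⟨hoddq, hndvd⟩
    have hq2 : q % 2 = 1 := Nat.odd_iff.mp hoddq
    have hq1 : 1 ≤ q := by omega
    have hcard3 : Fintype.card F % 4 = 3 := by omega
    have hnsq : ¬ IsSquare (-1 : F) := by
      rw [FiniteField.isSquare_neg_one_iff]
      simp [hcard3]
    have hsum : ∀ s t : F, s * s + t * t = 0 → s = 0 ∧ t = 0 := by
      intro s t hst
      by_cases ht : t = 0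
      · subst ht
        simp only [mul_zero, add_zero] at hst
        exact ⟨by simpa using mul_self_eq_zero.mp hst, rfl⟩
      · exfalso
        apply hnsq
        refine ⟨s / t, ?_⟩
        field_simp
        linear_combination -hst
    rintro a ⟨z, rfl⟩ hane
    dsimp only at hane ⊢
    rw [hmemS] at hane ⊢
    set s := φ z.1 with hs
    set t := φ z.2 with ht
    have hN : s * s + t * t ≠ 0 := by
      intro h
      obtain ⟨h1, h2⟩ := hsum s t h
      exact hane (by rw [h1, h2]; simp)
    set N := s * s + t * t with hNdef
    refine ⟨((s / N) • eps0 F n, (-t / N) • eps0 F n), ?_, ?_⟩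
    · exact ⟨(algebraMap F R (s/N), algebraMap F R (-t/N)), by dsimp only; rw [hsurjS]⟩
    · have h1 : s * (s / N) - t * (-t / N) = 1 := by
        field_simp
        linear_combination -hNdef
      have h2 : s * (-t / N) + t * (s / N) = 0 := by
        field_simp
        ring
      rw [hprod, h1, h2, one_smul, zero_smul]
  -- Psi part
  have part1b : (Odd q ∧ ¬ 4 ∣ q - 1) →
      ∃ Ψ : (F[X] ⧸ Ideal.span {(X : F[X]) ^ 2 + 1})
          →ₗ[F] AdjoinRoot (X ^ n - 1 : F[X]) × AdjoinRoot (X ^ n - 1 : F[X]),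
        Function.Injective Ψ ∧ Ψ 1 = (eps0 F n, 0) ∧
        (∀ u v, Ψ (u * v) = cdMul (⇑σ) (Ψ u) (Ψ v)) ∧
        Set.range Ψ = Set.range (fun z => cdMul (⇑σ) z (eps0 F n, 0)) := by
    rintro ⟨hoddq, hndvd⟩
    set g : F[X] := X ^ 2 + 1 with hgdef
    set I : Ideal F[X] := Ideal.span {g} with hI
    set mkQ : F[X] →+* F[X] ⧸ I := Ideal.Quotient.mk I with hmkQ
    set θ : F[X] ⧸ I := mkQ X with hθdef
    have hg_monic : g.Monic := by
      have := Polynomial.monic_X_pow_add_C (R := F) (1 : F) (two_ne_zero)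
      simpa [hgdef] using this
    have hg0 : mkQ g = 0 := Ideal.Quotient.eq_zero_iff_mem.mpr (Ideal.subset_span rfl)
    have hθsq : θ ^ 2 = -1 := by
      have h1 : θ ^ 2 + 1 = 0 := by
        rw [hθdef, ← map_pow, ← map_one mkQ, ← map_add]
        exact hg0
      linear_combination h1
    have halg : ∀ a : F, a • (1 : F[X] ⧸ I) = mkQ (C a) := by
      intro a
      have h1 : (Ideal.Quotient.mkₐ F I) (a • (1 : F[X]))
          = a • (Ideal.Quotient.mkₐ F I) (1 : F[X]) := map_smul _ _ _
      rw [map_one, Polynomial.smul_eq_C_mul, mul_one] at h1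
      rw [← h1, Ideal.Quotient.mkₐ_eq_mk]
    have hsmul : ∀ (a : F) (u : F[X] ⧸ I), a • u = mkQ (C a) * u := by
      intro a u
      rw [← halg, smul_mul_assoc, one_mul]
    have hg_ne1 : g ≠ 1 := by
      intro h
      have := congrArg (fun p => Polynomial.coeff p 2) h
      simp [hgdef, Polynomial.coeff_one] at this
    have hgdeg : g.natDegree = 2 := by
      simpa [hgdef] using Polynomial.natDegree_X_pow_add_C (n := 2) (r := (1 : F))
    have hrep : ∀ u : F[X] ⧸ I, ∃ a b : F, u = a • 1 + b • θ := by
      intro u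
      obtain ⟨p, rfl⟩ := Ideal.Quotient.mk_surjective u
      refine ⟨(p %ₘ g).coeff 0, (p %ₘ g).coeff 1, ?_⟩
      have hmod : mkQ p = mkQ (p %ₘ g) := by
        conv_lhs => rw [← Polynomial.modByMonic_add_div p g]
        rw [map_add, map_mul, hg0, zero_mul, add_zero]
      have hdeglt : (p %ₘ g).natDegree ≤ 1 := by
        have h1 := Polynomial.natDegree_modByMonic_lt p hg_monic hg_ne1
        omega
      have heq := Polynomial.eq_X_add_C_of_natDegree_le_one hdeglt
      show mkQ p = _
      rw [hmod]
      conv_lhs => rw [heq]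
      rw [map_add, map_mul, halg, hsmul, hθdef]
      ring
    have hli : LinearIndependent F ![(1 : F[X] ⧸ I), θ] := by
      rw [LinearIndependent.pair_iff]
      intro a b hab
      have hz : mkQ (C a + C b * X) = 0 := by
        rw [map_add, map_mul, ← halg, ← hsmul]
        simpa [hθdef] using hab
      have hdvd : g ∣ C a + C b * X := by
        rw [← Ideal.mem_span_singleton, ← hI]
        exact Ideal.Quotient.eq_zero_iff_mem.mp hz
      have hdeg2 : (g : F[X]).degree = 2 := by
        simpa [hgdef] using Polynomial.degree_X_pow_add_C (by norm_num : 0 < 2) (1 : F)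
      have hdlt : (C a + C b * X : F[X]).degree < g.degree := by
        have h1 : (C a + C b * X : F[X]).degree ≤ 1 := by
          refine le_trans (Polynomial.degree_add_le _ _) ?_
          rw [sup_le_iff]
          constructor
          · exact le_trans Polynomial.degree_C_le (by norm_num)
          · refine le_trans (Polynomial.degree_mul_le _ _) ?_
            have := add_le_add (Polynomial.degree_C_le (a := b)) (Polynomial.degree_X_le (R := F))
            simpa using this
        rw [hdeg2]
        exact lt_of_le_of_lt h1 (by norm_num)
      have hzero : (C a + C b * X : F[X]) = 0 :=
        Polynomial.eq_zero_of_dvd_of_degree_lt hdvd hdlt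
      constructor
      · have := congrArg (fun p => Polynomial.coeff p 0) hzero
        simpa using this
      · have := congrArg (fun p => Polynomial.coeff p 1) hzero
        simpa using this
    have hspan : ⊤ ≤ Submodule.span F (Set.range ![(1 : F[X] ⧸ I), θ]) := by
      intro u _
      have hrange : Set.range ![(1 : F[X] ⧸ I), θ] = {(1 : F[X] ⧸ I), θ} := by
        ext w
        simp [Fin.exists_fin_two]
        tauto
      rw [hrange]
      obtain ⟨a, b, hab⟩ := hrep u
      exact Submodule.mem_span_pair.mpr ⟨a, b, hab.symm⟩
    set b2 : Module.Basis (Fin 2) F (F[X] ⧸ I) := Module.Basis.mk hli hspan with hb2def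
    have hb20 : b2 0 = 1 := by rw [hb2def, Module.Basis.coe_mk]; rfl
    have hb21 : b2 1 = θ := by rw [hb2def, Module.Basis.coe_mk]; rfl
    set Ψ0 : (F[X] ⧸ I) →ₗ[F] R × R :=
      b2.constr F ![((eps0 F n, (0:R)) : R × R), ((0:R), eps0 F n)] with hΨ0
    have hΨ01 : Ψ0 (b2 0) = ((eps0 F n, (0:R)) : R × R) := by
      rw [hΨ0, Module.Basis.constr_basis]
      simp
    have hΨ02 : Ψ0 (b2 1) = (((0:R), eps0 F n) : R × R) := by
      rw [hΨ0, Module.Basis.constr_basis]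
      simp
    have hΨab : ∀ a b : F, Ψ0 (a • 1 + b • θ) = (a • eps0 F n, b • eps0 F n) := by
      intro a b
      rw [← hb20, ← hb21, map_add, map_smul, map_smul, hΨ01, hΨ02]
      simp [Prod.smul_mk]
    refine ⟨Ψ0, ?_, ?_, ?_, ?_⟩
    · -- injective
      intro u v huv
      obtain ⟨a, b, rfl⟩ := hrep u
      obtain ⟨c, d, rfl⟩ := hrep v
      rw [hΨab, hΨab, Prod.mk.injEq] at huv
      obtain ⟨h1, h2⟩ := huv
      have ha : a = c := by
        have h3 : (a - c) • eps0 F n = 0 := by rw [sub_smul, h1, sub_self]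
        rcases smul_eq_zero.mp h3 with h | h
        · exact sub_eq_zero.mp h
        · exact absurd h heps_ne
      have hb : b = d := by
        have h3 : (b - d) • eps0 F n = 0 := by rw [sub_smul, h2, sub_self]
        rcases smul_eq_zero.mp h3 with h | h
        · exact sub_eq_zero.mp h
        · exact absurd h heps_ne
      rw [ha, hb]
    · -- Ψ 1
      have h1 : (1 : F[X] ⧸ I) = (1 : F) • 1 + (0 : F) • θ := by simp
      rw [h1, hΨab]
      simp
    · -- multiplicative
      intro u v
      obtain ⟨a, b, rfl⟩ := hrep u
      obtain ⟨c, d, rfl⟩ := hrep v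
      have hmul : ((a • 1 + b • θ) * (c • 1 + d • θ) : F[X] ⧸ I)
          = (a * c - b * d) • 1 + (a * d + b * c) • θ := by
        simp only [hsmul]
        simp only [map_mul, map_sub, map_add, map_one]
        ring_nf
        linear_combination (mkQ (C b) * mkQ (C d)) * hθsq
      rw [hmul, hΨab, hΨab, hΨab, hprod]
    · -- range
      ext w
      constructor
      · rintro ⟨u, rfl⟩
        obtain ⟨a, b, rfl⟩ := hrep u
        rw [hΨab]
        exact ⟨(algebraMap F R a, algebraMap F R b), by dsimp only; rw [hsurjS]⟩
      · rintro ⟨z, rfl⟩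
        dsimp only
        rw [hmemS]
        exact ⟨φ z.1 • 1 + φ z.2 • θ, hΨab _ _⟩
  -- Part 2
  have part2 : (Even q ∨ 4 ∣ q - 1) →
      ∃ r : F, r ^ 2 = -1 ∧
        Module.finrank F
          (Submodule.span F (Set.range fun z => cdMul (⇑σ) z (r • eps0 F n, eps0 F n))) = 1 ∧
        ∀ c d, (c ∈ Set.range fun z => cdMul (⇑σ) z (r • eps0 F n, eps0 F n)) →
          (d ∈ Set.range fun z => cdMul (⇑σ) z (r • eps0 F n, eps0 F n)) →
          innerA c d = 0 := by
    intro hcase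
    have hq2 : 2 ≤ q := by rw [hq]; exact Fintype.one_lt_card
    have hcard : Fintype.card F % 4 ≠ 3 := by
      rw [← hq]
      rcases hcase with h | h
      · have := Nat.even_iff.mp h
        omega
      · omega
    obtain ⟨r, hr⟩ := FiniteField.isSquare_neg_one_iff.mpr hcard
    have hr2 : r ^ 2 = -1 := by rw [sq]; exact hr.symm
    have hcd : ∀ z : R × R, cdMul (⇑σ) z (r • eps0 F n, eps0 F n)
        = (φ z.1 + r * φ z.2) • ((r • eps0 F n, eps0 F n) : R × R) := by
      intro z
      have h1 : z.1 * (r • eps0 F n) - z.2 * σ (eps0 F n)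
          = ((φ z.1 + r * φ z.2) * r) • eps0 F n := by
        rw [hσeps, mul_smul_comm, key, key, smul_smul]
        rw [show (φ z.1 + r * φ z.2) * r = r * φ z.1 - φ z.2 from by
          linear_combination (φ z.2) * hr2]
        rw [sub_smul]
      have h2 : z.1 * eps0 F n + z.2 * σ (r • eps0 F n)
          = (φ z.1 + r * φ z.2) • eps0 F n := by
        rw [map_smul, hσeps, mul_smul_comm, key, key, smul_smul, ← add_smul]
      refine Prod.ext ?_ ?_
      · simpa [cdMul, Prod.smul_mk, smul_smul] using h1
      · simpa [cdMul, Prod.smul_mk] using h2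
    have hgne : ((r • eps0 F n, eps0 F n) : R × R) ≠ 0 := by
      intro h
      exact heps_ne (congrArg Prod.snd h)
    refine ⟨r, hr2, ?_, ?_⟩
    · have hspan1 : Submodule.span F (Set.range fun z => cdMul (⇑σ) z (r • eps0 F n, eps0 F n))
          = Submodule.span F {((r • eps0 F n, eps0 F n) : R × R)} := by
        apply le_antisymm
        · rw [Submodule.span_le]
          rintro w ⟨z, rfl⟩
          dsimp only
          rw [hcd]
          exact Submodule.smul_mem _ _ (Submodule.mem_span_singleton_self _)
        · rw [Submodule.span_le]
          rintro w hw
          rw [Set.mem_singleton_iff] at hw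
          subst hw
          refine Submodule.subset_span ⟨((1 : R), (0 : R)), ?_⟩
          dsimp only
          rw [hcd]
          simp
      rw [hspan1]
      exact finrank_span_singleton hgne
    · intro c d hc hd
      obtain ⟨zc, rfl⟩ := hc
      obtain ⟨zd, rfl⟩ := hd
      dsimp only
      rw [hcd, hcd]
      have h1 : ∀ u : F, (u • ((r • eps0 F n, eps0 F n) : R × R))
          = ((u * r) • eps0 F n, u • eps0 F n) := by
        intro u
        rw [Prod.smul_mk, smul_smul]
      rw [h1, h1]
      set u := φ zc.1 + r * φ zc.2
      set v := φ zd.1 + r * φ zd.2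
      have hsum : ∀ s t : F, (∑ i : Fin n, (s * coords (eps0 F n) i) * (t * coords (eps0 F n) i))
          = (s * t) * ∑ i : Fin n, coords (eps0 F n) i * coords (eps0 F n) i := by
        intro s t
        rw [Finset.mul_sum]
        exact Finset.sum_congr rfl fun i _ => by ring
      show (∑ i : Fin n, coords ((u * r) • eps0 F n) i * coords ((v * r) • eps0 F n) i)
          + (∑ i : Fin n, coords (u • eps0 F n) i * coords (v • eps0 F n) i) = 0
      simp only [coords_smul]
      rw [hsum, hsum]
      rw [show (u * r) * (v * r) = -(u * v) from by linear_combination (u * v) * hr2]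
      ring
  exact ⟨⟨goal1a, goal1b⟩, goal2, goal3, fun h => ⟨part1 h, part1b h⟩, part2⟩

end CDC
end
end

section
/- Let ε be a primitive idempotent of R_n with σ(ε) ≠ ε, and set e = (ε, 0), ē = (σ(ε), 0) ∈ A_n. Then e + ē is a central idempotent of A_n; K := R_n/(1−ε)R_n is a finite field (a field extension of F); and there exists an injective F-linear multiplicative map Φ : M₂(K) → A_n with Φ(I₂) = e + ē, whose image is the two-sided ideal A_n(e + ē), and which satisfies bar(Φ(m)) = Φ(adjugate(m)) for every m ∈ M₂(K), i.e. the bar-image of Φ([[a,b],[c,d]]) is Φ([[d,−b],[−c,a]]). -/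
open Polynomial

noncomputable section

namespace CDC

set_option maxHeartbeats 1000000

/-- an idempotent `ε ≠ 0` is primitive if it is not the sum of two nonzero orthogonal
idempotents. -/
def IsPrimitiveIdem {R : Type*} [CommRing R] (ε : R) : Prop :=
  IsIdempotentElem ε ∧ ε ≠ 0 ∧
    ¬ ∃ ε' ε'' : R, IsIdempotentElem ε' ∧ IsIdempotentElem ε'' ∧ ε' ≠ 0 ∧ ε'' ≠ 0 ∧
      ε' * ε'' = 0 ∧ ε = ε' + ε''

/-- In a commutative monoid, from `a ^ i = a ^ j` with `i < j` one gets an idempotent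
positive power of `a`. -/
lemma aux_pow_idem {K : Type*} [CommMonoid K] (a : K) {i j : ℕ} (hij : i < j)
    (h : a ^ i = a ^ j) : ∃ m, 0 < m ∧ a ^ m * a ^ m = a ^ m := by
  obtain ⟨d, rfl⟩ : ∃ d, j = i + (d + 1) := ⟨j - i - 1, by omega⟩
  set D := d + 1 with hD
  have hstep : ∀ u, a ^ (i + u + D) = a ^ (i + u) := by
    intro u
    calc a ^ (i + u + D) = a ^ (i + D) * a ^ u := by rw [← pow_add]; congr 1; omega
    _ = a ^ i * a ^ u := by rw [← h]
    _ = a ^ (i + u) := by rw [← pow_add]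
  have hiter : ∀ t u, a ^ (i + u + t * D) = a ^ (i + u) := by
    intro t
    induction t with
    | zero => intro u; simp
    | succ t ih =>
      intro u
      calc a ^ (i + u + (t + 1) * D) = a ^ (i + (u + t * D) + D) := by congr 1; ring
      _ = a ^ (i + (u + t * D)) := hstep _
      _ = a ^ (i + u) := by
          have := ih u
          calc a ^ (i + (u + t * D)) = a ^ (i + u + t * D) := by congr 1; omega
          _ = a ^ (i + u) := this
  have hge : i + 1 ≤ (i + 1) * D := Nat.le_mul_of_pos_right _ (by omega)
  obtain ⟨u, hu⟩ : ∃ u, (i + 1) * D = i + u := ⟨(i + 1) * D - i, by omega⟩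
  refine ⟨(i + 1) * D, by positivity, ?_⟩
  calc a ^ ((i + 1) * D) * a ^ ((i + 1) * D) = a ^ (i + u + (i + 1) * D) := by
        rw [← pow_add]; congr 1; omega
  _ = a ^ (i + u) := hiter _ _
  _ = a ^ ((i + 1) * D) := by congr 1; omega

/-- Let `ε` be a primitive idempotent of `R_n` with `σ(ε) ≠ ε`, and set
`e = (ε,0)`, `ē = (σ(ε),0) ∈ A_n`. Then `e + ē` is a central idempotent of `A_n`;
`K := R_n/(1−ε)R_n` is a finite field; and there is an injective `F`-linear multiplicative
map `Φ : M₂(K) → A_n` with `Φ(I₂) = e + ē`, whose image is the two-sided ideal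
`A_n(e + ē)`, and which intertwines the bar map `(a,b) ↦ (σ(a), −b)` of `A_n` with the
adjugate of matrices. -/
theorem consta_dihedral_stmt3 {F : Type*} [Field F] [Fintype F] (q : ℕ)
    (hq : q = Fintype.card F) (n : ℕ) (hn : 1 < n) (hodd : Odd n)
    (hcop : Nat.Coprime n q)
    (σ : AdjoinRoot (X ^ n - 1 : F[X]) ≃ₐ[F] AdjoinRoot (X ^ n - 1 : F[X]))
    (hσ : σ (AdjoinRoot.root _) = (AdjoinRoot.root _) ^ (n - 1))
    (ε : AdjoinRoot (X ^ n - 1 : F[X])) (hprim : IsPrimitiveIdem ε) (hε : σ ε ≠ ε) :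
    (cdMul (⇑σ) (ε + σ ε, 0) (ε + σ ε, 0) = (ε + σ ε, 0) ∧
      ∀ z, cdMul (⇑σ) (ε + σ ε, 0) z = cdMul (⇑σ) z (ε + σ ε, 0)) ∧
    Finite (AdjoinRoot (X ^ n - 1 : F[X]) ⧸ Ideal.span {1 - ε}) ∧
    IsField (AdjoinRoot (X ^ n - 1 : F[X]) ⧸ Ideal.span {1 - ε}) ∧
    ∃ Φ : Matrix (Fin 2) (Fin 2) (AdjoinRoot (X ^ n - 1 : F[X]) ⧸ Ideal.span {1 - ε})
        →ₗ[F] AdjoinRoot (X ^ n - 1 : F[X]) × AdjoinRoot (X ^ n - 1 : F[X]),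
      Function.Injective Φ ∧
      Φ 1 = (ε + σ ε, 0) ∧
      (∀ m m', Φ (m * m') = cdMul (⇑σ) (Φ m) (Φ m')) ∧
      Set.range Φ = Set.range (fun z => cdMul (⇑σ) z (ε + σ ε, 0)) ∧
      (∀ m, (σ (Φ m).1, -(Φ m).2) = Φ m.adjugate) ∧
      ∀ a b c d : AdjoinRoot (X ^ n - 1 : F[X]) ⧸ Ideal.span {1 - ε},
        (σ (Φ !![a, b; c, d]).1, -(Φ !![a, b; c, d]).2) = Φ !![d, -b; -c, a] := by
  obtain ⟨hεi', hε0, hεprim⟩ := hprim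
  have hεi : ε * ε = ε := hεi'
  -- basic facts about σ
  have hroot : (AdjoinRoot.root (X ^ n - 1 : F[X])) ^ n = 1 := by
    have h : (AdjoinRoot.mk (X ^ n - 1 : F[X])) (X ^ n - 1 : F[X]) = 0 := AdjoinRoot.mk_self
    rw [map_sub, map_pow, AdjoinRoot.mk_X, map_one, sub_eq_zero] at h
    exact h
  have hσσ : ∀ r : AdjoinRoot (X ^ n - 1 : F[X]), σ (σ r) = r := by
    have hcomp : σ.toAlgHom.comp σ.toAlgHom = AlgHom.id F _ := by
      apply AdjoinRoot.algHom_ext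
      obtain ⟨k, rfl⟩ : ∃ k, n = k + 2 := ⟨n - 2, by omega⟩
      simp only [AlgHom.coe_comp, Function.comp_apply, AlgEquiv.toAlgHom_eq_coe,
        AlgHom.coe_coe, AlgEquiv.coe_coe, AlgHom.coe_id, id_eq, hσ, map_pow]
      change σ (σ _) = _
      rw [hσ, map_pow, hσ, ← pow_mul]
      have he : (k + 2 - 1) * (k + 2 - 1) = (k + 2) * k + 1 := by
        have h1 : k + 2 - 1 = k + 1 := rfl
        rw [h1]; ring
      rw [he, pow_add (AdjoinRoot.root _) ((k + 2) * k) 1,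
        pow_mul (AdjoinRoot.root _) (k + 2) k, hroot, one_pow, one_mul, pow_one]
    intro r
    have := congrArg (fun f : AdjoinRoot (X ^ n - 1 : F[X]) →ₐ[F]
        AdjoinRoot (X ^ n - 1 : F[X]) => f r) hcomp
    simpa using this
  have hσεi : σ ε * σ ε = σ ε := by rw [← map_mul, hεi]
  -- orthogonality of ε and σ ε
  have horth : ε * σ ε = 0 := by
    by_contra h
    by_cases h2 : ε - ε * σ ε = 0
    · apply hε
      have hεe : ε = ε * σ ε := sub_eq_zero.mp h2
      have h3 : σ ε = σ ε * ε := by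
        have := congrArg σ hεe
        rw [map_mul, hσσ] at this
        exact this
      calc σ ε = σ ε * ε := h3
      _ = ε * σ ε := mul_comm _ _
      _ = ε := hεe.symm
    · refine hεprim ⟨ε * σ ε, ε - ε * σ ε, ?_, ?_, h, h2, ?_, by ring⟩
      · show ε * σ ε * (ε * σ ε) = ε * σ ε
        linear_combination (σ ε * σ ε) * hεi + ε * hσεi
      · show (ε - ε * σ ε) * (ε - ε * σ ε) = ε - ε * σ ε
        linear_combination (1 - 2 * σ ε + σ ε * σ ε) * hεi + ε * hσεi
      · linear_combination (σ ε - σ ε * σ ε) * hεi - ε * hσεi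
  -- (n : F) ≠ 0
  have hnF : (n : F) ≠ 0 := by
    intro h0
    haveI := ringChar.charP F
    obtain ⟨m, hp, hcard⟩ := FiniteField.card F (ringChar F)
    have h1 : ringChar F ∣ n := (CharP.cast_eq_zero_iff F (ringChar F) n).mp h0
    have h2 : ringChar F ∣ q := by
      rw [hq, hcard]
      exact dvd_pow_self _ m.pos.ne'
    have h3 : ringChar F ∣ 1 := by
      have h4 := Nat.dvd_gcd h1 h2
      rw [Nat.Coprime] at hcop
      rwa [hcop] at h4
    exact hp.ne_one (Nat.dvd_one.mp h3)
  have hsqf : Squarefree (X ^ n - 1 : F[X]) := by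
    have hsep : (X ^ n - 1 : F[X]).Separable := by
      have := Polynomial.separable_X_pow_sub_C (1 : F) hnF one_ne_zero
      simpa using this
    exact hsep.squarefree
  have hred : ∀ (r : AdjoinRoot (X ^ n - 1 : F[X])) (k : ℕ), k ≠ 0 → r ^ k = 0 → r = 0 := by
    intro r k hk h0
    obtain ⟨g, rfl⟩ := AdjoinRoot.mk_surjective r
    rw [← map_pow, AdjoinRoot.mk_eq_zero] at h0
    exact AdjoinRoot.mk_eq_zero.mpr ((hsqf.dvd_pow_iff_dvd hk).mp h0)
  have hf0 : (X ^ n - 1 : F[X]) ≠ 0 := by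
    have hm : (X ^ n - 1 : F[X]).Monic := by
      have := Polynomial.monic_X_pow_sub_C (1 : F) (by omega : n ≠ 0)
      simpa using this
    exact hm.ne_zero
  haveI : Module.Finite F (AdjoinRoot (X ^ n - 1 : F[X])) := (AdjoinRoot.powerBasis hf0).finite
  haveI hRfin : Finite (AdjoinRoot (X ^ n - 1 : F[X])) := Module.finite_of_finite F
  set I : Ideal (AdjoinRoot (X ^ n - 1 : F[X])) := Ideal.span {1 - ε} with hI
  have hker : I ≤ LinearMap.ker (LinearMap.mulLeft (AdjoinRoot (X ^ n - 1 : F[X])) ε) := by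
    rw [hI, Ideal.span_le, Set.singleton_subset_iff]
    simp only [SetLike.mem_coe, LinearMap.mem_ker, LinearMap.mulLeft_apply]
    linear_combination -hεi
  let s : (AdjoinRoot (X ^ n - 1 : F[X]) ⧸ I) →ₗ[F] AdjoinRoot (X ^ n - 1 : F[X]) :=
    (Submodule.liftQ I (LinearMap.mulLeft _ ε) hker).restrictScalars F
  have hs_mk : ∀ r, s (Ideal.Quotient.mk I r) = ε * r := fun r => rfl
  have hmsurj := Ideal.Quotient.mk_surjective (I := I)
  have hs_eps : ∀ kk, ε * s kk = s kk := by
    intro kk; obtain ⟨r, rfl⟩ := hmsurj kk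
    rw [hs_mk, ← mul_assoc, hεi]
  have hπs : ∀ kk, Ideal.Quotient.mk I (s kk) = kk := by
    intro kk; obtain ⟨r, rfl⟩ := hmsurj kk
    rw [hs_mk, Ideal.Quotient.eq]
    rw [hI, Ideal.mem_span_singleton]
    exact ⟨-r, by ring⟩
  have hs_inj : Function.Injective s := by
    intro a b hab
    rw [← hπs a, ← hπs b, hab]
  have hs_mul : ∀ k1 k2, s (k1 * k2) = s k1 * s k2 := by
    intro k1 k2
    obtain ⟨r1, rfl⟩ := hmsurj k1; obtain ⟨r2, rfl⟩ := hmsurj k2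
    rw [← map_mul, hs_mk, hs_mk, hs_mk]
    linear_combination (-(r1 * r2)) * hεi
  have hs_one : s 1 = ε := by
    have h1 : (1 : AdjoinRoot (X ^ n - 1 : F[X]) ⧸ I) = Ideal.Quotient.mk I 1 := rfl
    rw [h1, hs_mk, mul_one]
  have hvA : ∀ kk, s kk * ε = s kk := fun kk => by rw [mul_comm]; exact hs_eps kk
  have hσs : ∀ kk, σ ε * σ (s kk) = σ (s kk) := fun kk => by rw [← map_mul, hs_eps]
  have hvB : ∀ kk, s kk * σ ε = 0 := by
    intro kk
    calc s kk * σ ε = (ε * s kk) * σ ε := by rw [hs_eps]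
    _ = s kk * (ε * σ ε) := by ring
    _ = 0 := by rw [horth, mul_zero]
  have hvC : ∀ kk, σ (s kk) * ε = 0 := by
    intro kk
    calc σ (s kk) * ε = (σ ε * σ (s kk)) * ε := by rw [hσs]
    _ = σ (s kk) * (ε * σ ε) := by ring
    _ = 0 := by rw [horth, mul_zero]
  have hvD : ∀ kk, σ (s kk) * σ ε = σ (s kk) := fun kk => by rw [mul_comm]; exact hσs kk
  have hεσs : ∀ kk, ε * σ (s kk) = 0 := fun kk => by rw [mul_comm]; exact hvC kk
  have hσεs : ∀ kk, σ ε * s kk = 0 := fun kk => by rw [mul_comm]; exact hvB kk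
  have hv : ∀ k1 k2, s k1 * σ (s k2) = 0 := by
    intro k1 k2
    calc s k1 * σ (s k2) = (ε * s k1) * (σ ε * σ (s k2)) := by rw [hs_eps, hσs]
    _ = (ε * σ ε) * (s k1 * σ (s k2)) := by ring
    _ = 0 := by rw [horth, zero_mul]
  have hv' : ∀ k1 k2, σ (s k1) * s k2 = 0 := fun k1 k2 => by rw [mul_comm]; exact hv k2 k1
  have hone : (1 : AdjoinRoot (X ^ n - 1 : F[X]) ⧸ I) ≠ 0 := by
    intro h1
    have h2 : (1 : AdjoinRoot (X ^ n - 1 : F[X])) ∈ I := by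
      have h3 : Ideal.Quotient.mk I 1 = 0 := by rw [map_one]; exact h1
      exact Ideal.Quotient.eq_zero_iff_mem.mp h3
    rw [hI, Ideal.mem_span_singleton] at h2
    obtain ⟨u, hu⟩ := h2
    exact hε0 (by linear_combination ε * hu - u * hεi)
  have hidem : ∀ kk : AdjoinRoot (X ^ n - 1 : F[X]) ⧸ I, kk * kk = kk → kk = 0 ∨ kk = 1 := by
    intro kk hkk
    by_contra hcon
    push_neg at hcon
    obtain ⟨hk0, hk1⟩ := hcon
    have h1 : s kk * s kk = s kk := by rw [← hs_mul, hkk]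
    refine hεprim ⟨s kk, ε - s kk, ?_, ?_, ?_, ?_, ?_, by ring⟩
    · exact h1
    · show (ε - s kk) * (ε - s kk) = ε - s kk
      linear_combination hεi - 2 * hs_eps kk + h1
    · intro h; exact hk0 (hs_inj (by rw [h, map_zero]))
    · intro h
      apply hk1
      apply hs_inj
      rw [hs_one]
      exact (sub_eq_zero.mp h).symm
    · linear_combination hs_eps kk - h1
  have hKred : ∀ (kk : AdjoinRoot (X ^ n - 1 : F[X]) ⧸ I) (j : ℕ),
      j ≠ 0 → kk ^ j = 0 → kk = 0 := by
    intro kk j hj h0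
    have hsp : ∀ t : ℕ, t ≠ 0 → s (kk ^ t) = (s kk) ^ t := by
      intro t
      induction t with
      | zero => intro h; exact absurd rfl h
      | succ t ih =>
        intro _
        by_cases ht : t = 0
        · subst ht; simp
        · rw [pow_succ, hs_mul, ih ht, pow_succ]
    have hz : (s kk) ^ j = 0 := by rw [← hsp j hj, h0, map_zero]
    apply hs_inj
    rw [map_zero]
    exact hred _ j hj hz
  haveI hKfin : Finite (AdjoinRoot (X ^ n - 1 : F[X]) ⧸ I) :=
    Finite.of_surjective _ hmsurj
  have hfield : IsField (AdjoinRoot (X ^ n - 1 : F[X]) ⧸ I) := by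
    refine ⟨⟨0, 1, fun h => hone h.symm⟩, mul_comm, ?_⟩
    intro a ha
    obtain ⟨i, j, hij, hpow⟩ := Finite.exists_ne_map_eq_of_infinite (fun t : ℕ => a ^ t)
    have key : ∃ m, 0 < m ∧ a ^ m * a ^ m = a ^ m := by
      rcases hij.lt_or_gt with h | h
      · exact aux_pow_idem a h hpow
      · exact aux_pow_idem a h hpow.symm
    obtain ⟨m, hm, hidm⟩ := key
    rcases hidem _ hidm with h0 | h1
    · exact absurd (hKred a m hm.ne' h0) ha
    · refine ⟨a ^ (m - 1), ?_⟩
      calc a * a ^ (m - 1) = a ^ m := by rw [← pow_succ']; congr 1; omega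
      _ = 1 := h1
  refine ⟨⟨?_, ?_⟩, hKfin, hfield,
    ⟨⟨⟨fun m => (s (m 0 0) + σ (s (m 1 1)), s (m 0 1) - σ (s (m 1 0))), ?_⟩, ?_⟩,
      ?_, ?_, ?_, ?_, ?_, ?_⟩⟩
  · -- idempotent
    simp only [cdMul, mul_zero, zero_mul, sub_zero, add_zero, Prod.mk.injEq]
    refine ⟨?_, by simp⟩
    linear_combination hεi + hσεi + 2 * horth
  · -- central
    intro z
    simp only [cdMul, mul_zero, zero_mul, sub_zero, add_zero, zero_add, map_zero, map_add,
      hσσ, Prod.mk.injEq]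
    constructor <;> ring
  · -- map_add
    intro m m'
    simp only [Matrix.add_apply, map_add, Prod.mk_add_mk, Prod.mk.injEq]
    constructor <;> ring
  · -- map_smul
    intro c m
    simp only [Matrix.smul_apply, map_smul, RingHom.id_apply, Prod.smul_mk, smul_add,
      smul_sub, Prod.mk.injEq]
  · -- injective
    intro m m' hmm
    simp only [LinearMap.coe_mk, AddHom.coe_mk, Prod.mk.injEq] at hmm
    obtain ⟨h1, h2⟩ := hmm
    have e00 : s (m 0 0) = s (m' 0 0) := by
      have h3 := congrArg (fun r => ε * r) h1
      simpa only [mul_add, hs_eps, hεσs, add_zero] using h3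
    have e11 : σ (s (m 1 1)) = σ (s (m' 1 1)) := by
      have h3 := congrArg (fun r => σ ε * r) h1
      simpa only [mul_add, hσs, hσεs, zero_add] using h3
    have e01 : s (m 0 1) = s (m' 0 1) := by
      have h3 := congrArg (fun r => ε * r) h2
      simpa only [mul_sub, hs_eps, hεσs, sub_zero] using h3
    have e10 : σ (s (m 1 0)) = σ (s (m' 1 0)) := by
      have h3 := congrArg (fun r => σ ε * r) h2
      have h4 := h3
      simp only [mul_sub, hσs, hσεs, zero_sub, neg_inj] at h4
      exact h4
    ext i jj
    fin_cases i <;> fin_cases jj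
    · exact hs_inj e00
    · exact hs_inj e01
    · exact hs_inj (σ.injective e10)
    · exact hs_inj (σ.injective e11)
  · -- Φ 1
    simp only [LinearMap.coe_mk, AddHom.coe_mk, Matrix.one_apply, Fin.isValue,
      if_true, if_neg, Prod.mk.injEq]
    norm_num [hs_one]
  · -- multiplicative
    intro m m'
    simp only [LinearMap.coe_mk, AddHom.coe_mk, cdMul, Matrix.mul_apply, Fin.sum_univ_two,
      map_add, hs_mul, map_sub, map_mul, hσσ, Prod.mk.injEq]
    constructor
    · linear_combination -hv (m 0 0) (m' 1 1) - hv' (m 1 1) (m' 0 0) +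
        hv (m 0 1) (m' 0 1) + hv' (m 1 0) (m' 1 0)
    · linear_combination hv (m 0 0) (m' 1 0) - hv' (m 1 1) (m' 0 1) -
        hv (m 0 1) (m' 0 0) + hv' (m 1 0) (m' 1 1)
  · -- range
    ext z
    simp only [Set.mem_range, LinearMap.coe_mk, AddHom.coe_mk]
    constructor
    · rintro ⟨m, rfl⟩
      refine ⟨(s (m 0 0) + σ (s (m 1 1)), s (m 0 1) - σ (s (m 1 0))), ?_⟩
      simp only [cdMul, map_zero, mul_zero, sub_zero, zero_mul, zero_add, map_add, hσσ,
        Prod.mk.injEq]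
      constructor
      · linear_combination hvA (m 0 0) + hvB (m 0 0) + hvC (m 1 1) + hvD (m 1 1)
      · linear_combination hvB (m 0 1) + hvA (m 0 1) - hvD (m 1 0) - hvC (m 1 0)
    · rintro ⟨z, rfl⟩
      refine ⟨!![Ideal.Quotient.mk I z.1, Ideal.Quotient.mk I z.2;
                 Ideal.Quotient.mk I (-(σ z.2)), Ideal.Quotient.mk I (σ z.1)], ?_⟩
      simp [cdMul, hs_mk, map_neg, map_mul, hσσ, Prod.mk.injEq]
      constructor <;> ring
  · -- bar vs adjugate
    intro m
    simp only [Matrix.adjugate_fin_two m]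
    simp [map_add, map_neg, map_sub, hσσ, Prod.mk.injEq]
    constructor <;> ring
  · -- explicit matrices
    intro a b c d
    simp [map_add, map_neg, map_sub, hσσ, Prod.mk.injEq]
    constructor <;> ring

end CDC
end
end

section
/- Assume q is odd and 4 does not divide q − 1. Then there exist odd integers n₁ < n₂ < ⋯, each greater than 1 and coprime to q, such that: (i) log_q(n_i)/λ(n_i) → 0 as i → ∞; (ii) for every i, −1 belongs to the cyclic subgroup of (ℤ/n_iℤ)^× generated by q; and (iii) for every i, the multiplicative order of q in (ℤ/n_iℤ)^× is divisible by 2 but not by 4. -/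
noncomputable section

namespace CDC

/-- `λ(n)`: the minimum, over the prime divisors `p` of `n`, of the multiplicative order
of `q` modulo `p`. -/
def lam (q n : ℕ) : ℕ :=
  sInf ((fun p => orderOf ((q : ZMod p))) '' ↑n.primeFactors)

open Polynomial Finset Filter Real


lemma aux_sq_lt_two_pow : ∀ n : ℕ, 5 ≤ n → n^2 < 2^n := by
  intro n hn
  induction n with
  | zero => omega
  | succ m ih =>
    rcases Nat.lt_or_ge m 5 with h | h
    · interval_cases m <;> simp_all <;> norm_num
    · have h1 := ih (by omega)
      have : (m+1)^2 ≤ 2 * m^2 := by nlinarith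
      calc (m+1)^2 ≤ 2 * m^2 := this
        _ < 2 * 2^m := by omega
        _ = 2^(m+1) := by ring

lemma aux_one_add_pow {R : Type*} [CommRing R] (t : R) (ht : t * t = 0) (i : ℕ) :
    (1 + t) ^ i = 1 + (i : R) * t := by
  induction i with
  | zero => simp
  | succ m ih =>
    rw [pow_succ, ih]
    have : ((m : R) * t) * t = 0 := by rw [mul_assoc, ht, mul_zero]
    push_cast
    calc (1 + (m:R)*t) * (1+t) = 1 + (m:R)*t + t + ((m:R)*t)*t := by ring
      _ = 1 + ((m:R)+1)*t := by rw [this]; ring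

/-- LTE-style: for odd prime `p` and `x ≡ 1 mod p`, `p^2 ∤ ∑_{i<p} x^i`. -/
lemma aux_geom_sum_not_dvd {p : ℕ} (hp : p.Prime) (hodd : Odd p) {x : ℤ}
    (hx : (p:ℤ) ∣ x - 1) : ¬ ((p:ℤ)^2 ∣ ∑ i ∈ range p, x ^ i) := by
  intro hdvd
  have hp2 : (p^2 : ℕ) ≠ 0 := pow_ne_zero _ hp.ne_zero
  -- map everything to ZMod (p^2)
  set R := ZMod (p^2)
  obtain ⟨c, hc⟩ := hx
  have hxR : (x : R) = 1 + (p:R) * (c:R) := by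
    have : (x : ℤ) = 1 + p * c := by linarith
    rw [this]; push_cast [R]; ring
  have hpp : (p : R) * (p : R) = 0 := by
    have : ((p^2 : ℕ) : R) = 0 := ZMod.natCast_self _
    push_cast at this; rw [← this]; ring
  have ht : ((p:R) * (c:R)) * ((p:R) * (c:R)) = 0 := by
    calc ((p:R) * (c:R)) * ((p:R) * (c:R)) = ((p:R) * (p:R)) * ((c:R)*(c:R)) := by ring
      _ = 0 := by rw [hpp, zero_mul]
  -- the sum mod p^2
  have hsum : ((∑ i ∈ range p, x ^ i : ℤ) : R) = (p : R) := by
    push_cast [R]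
    have : ∀ i ∈ range p, (x:R) ^ i = 1 + (i:R) * ((p:R)*(c:R)) := by
      intro i _
      rw [hxR]; exact aux_one_add_pow _ ht i
    rw [Finset.sum_congr rfl this, Finset.sum_add_distrib]
    simp only [Finset.sum_const, card_range, nsmul_eq_mul, mul_one]
    have hgauss : (∑ i ∈ range p, (i:R)) * (p:R) = 0 := by
      have h2 : (∑ i ∈ range p, i) * 2 = p * (p-1) := Finset.sum_range_id_mul_two p
      obtain ⟨j, hj⟩ := hodd
      have hsid : (∑ i ∈ range p, i) = p * j := by
        have h3 : (∑ i ∈ range p, i) * 2 = (p * j) * 2 := by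
          rw [h2]; have : p - 1 = 2 * j := by omega
          rw [this]; ring
        exact Nat.eq_of_mul_eq_mul_right (by norm_num) h3
      have : ((∑ i ∈ range p, i : ℕ) : R) = (p:R) * (j:R) := by rw [hsid]; push_cast [R]; ring
      push_cast [R] at this ⊢
      rw [this]
      calc (p:R) * (j:R) * (p:R) = ((p:R)*(p:R)) * (j:R) := by ring
        _ = 0 := by rw [hpp, zero_mul]
    have : (∑ i ∈ range p, (i:R) * ((p:R)*(c:R))) = 0 := by
      rw [← Finset.sum_mul]
      calc (∑ i ∈ range p, (i:R)) * ((p:R)*(c:R))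
          = ((∑ i ∈ range p, (i:R)) * (p:R)) * (c:R) := by ring
        _ = 0 := by rw [hgauss, zero_mul]
    rw [this, add_zero]
  -- contradiction: p^2 ∣ sum ⇒ sum = 0 in R ⇒ p ≡ 0 mod p^2
  have h0 : ((∑ i ∈ range p, x ^ i : ℤ) : R) = 0 := by
    rw [ZMod.intCast_zmod_eq_zero_iff_dvd]
    exact_mod_cast hdvd
  rw [hsum] at h0
  have : (p^2 : ℕ) ∣ p := by
    have := (ZMod.natCast_eq_zero_iff p (p^2)).mp h0
    exact this
  have hp1 := hp.two_le
  nlinarith [Nat.le_of_dvd (by omega : 0 < p) this]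



/-- facts about products of distinct primes -/
lemma aux_prod_primes (s : Finset ℕ) (hs : ∀ p ∈ s, p.Prime) :
    Squarefree (∏ p ∈ s, p) ∧ (∏ p ∈ s, p).totient = ∏ p ∈ s, (p-1) := by
  induction s using Finset.induction with
  | empty => simp [squarefree_one]
  | @insert a s ha ih =>
    have hs' : ∀ p ∈ s, p.Prime := fun p hp => hs p (Finset.mem_insert_of_mem hp)
    have hap := hs a (Finset.mem_insert_self a s)
    obtain ⟨ih1, ih2⟩ := ih hs'
    have hcop : Nat.Coprime a (∏ p ∈ s, p) := by
      rw [hap.coprime_iff_not_dvd]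
      intro hdvd
      obtain ⟨r, hr, hra⟩ := (Prime.dvd_finset_prod_iff hap.prime _).mp hdvd
      have := ((hs' r hr).dvd_iff_eq hap.ne_one).mp hra
      exact ha (this ▸ hr)
    rw [Finset.prod_insert ha, Finset.prod_insert ha]
    constructor
    · exact (Nat.squarefree_mul hcop).mpr ⟨hap.squarefree, ih1⟩
    · rw [Nat.totient_mul hcop, ih2, Nat.totient_prime hap]

/-- the odd primes below m+6 -/
def Sm (m : ℕ) : Finset ℕ := (Finset.range (m+6)).filter (fun p => p.Prime ∧ p ≠ 2)

lemma Sm_primes (m : ℕ) : ∀ p ∈ Sm m, p.Prime := by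
  intro p hp; exact ((Finset.mem_filter.mp hp).2).1

lemma Sm_odd (m : ℕ) : ∀ p ∈ Sm m, Odd p := by
  intro p hp
  obtain ⟨h1, h2⟩ := (Finset.mem_filter.mp hp).2
  exact h1.odd_of_ne_two h2

lemma three_mem_Sm (m : ℕ) : 3 ∈ Sm m := by
  rw [Sm, Finset.mem_filter]
  exact ⟨Finset.mem_range.mpr (by omega), by norm_num⟩

lemma five_mem_Sm (m : ℕ) : 5 ∈ Sm m := by
  rw [Sm, Finset.mem_filter]
  exact ⟨Finset.mem_range.mpr (by omega), by norm_num⟩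

def kk (m : ℕ) : ℕ := ∏ p ∈ Sm m, p

lemma kk_sqfree (m : ℕ) : Squarefree (kk m) := (aux_prod_primes _ (Sm_primes m)).1

lemma kk_totient (m : ℕ) : (kk m).totient = ∏ p ∈ Sm m, (p-1) :=
  (aux_prod_primes _ (Sm_primes m)).2

lemma kk_odd (m : ℕ) : Odd (kk m) :=
  Finset.prod_induction _ Odd (fun a b => Odd.mul) odd_one (Sm_odd m)

lemma kk_3dvd (m : ℕ) : 3 ∣ kk m := Finset.dvd_prod_of_mem _ (three_mem_Sm m)

lemma kk_totient_ge (m : ℕ) : 8 ≤ (kk m).totient := by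
  rw [kk_totient]
  have hsub : ({3, 5} : Finset ℕ) ⊆ Sm m := by
    intro p hp
    rcases Finset.mem_insert.mp hp with h | h
    · exact h ▸ three_mem_Sm m
    · exact (Finset.mem_singleton.mp h) ▸ five_mem_Sm m
  calc (8:ℕ) = ∏ p ∈ ({3,5} : Finset ℕ), (p-1) := by decide
    _ ≤ ∏ p ∈ Sm m, (p-1) := by
      apply Finset.prod_le_prod_of_subset_of_one_le' hsub
      intro p hp _
      have := (Sm_primes m p hp).two_le
      omega

lemma kk_lt_pow (m : ℕ) : kk m < 2 ^ (kk m).totient := by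
  have h1 : kk m ≤ (kk m).totient ^ 2 := by
    rw [kk_totient, kk]
    rw [← Finset.prod_pow]
    apply Finset.prod_le_prod
    · intro p hp; omega
    · intro p hp
      have h2 := (Sm_primes m p hp).two_le
      have h3 : p ≠ 2 := ((Finset.mem_filter.mp hp).2).2
      have h4 : 3 ≤ p := by omega
      obtain ⟨a, ha⟩ : ∃ a, p = a + 1 := ⟨p - 1, by omega⟩
      subst ha
      simp only [Nat.add_sub_cancel]
      nlinarith
  have h2 := aux_sq_lt_two_pow ((kk m).totient) (by have := kk_totient_ge m; omega)
  omega

lemma kk_unbounded : ∀ b : ℕ, ∃ m, b ≤ kk m := by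
  intro b
  obtain ⟨p, hpb, hpp⟩ := Nat.exists_infinite_primes (b + 3)
  refine ⟨p, ?_⟩
  have hmem : p ∈ Sm p := by
    rw [Sm, Finset.mem_filter]
    refine ⟨Finset.mem_range.mpr (by omega), hpp, by omega⟩
  have hpos : 0 < kk p := Finset.prod_pos (fun x hx => (Sm_primes p x hx).pos)
  have := Nat.le_of_dvd hpos (Finset.dvd_prod_of_mem _ hmem)
  omega

/-- sums of reciprocals of odd primes below m tend to infinity -/
lemma aux_sum_recip_tendsto :
    Tendsto (fun m => ∑ p ∈ Sm m, (1 : ℝ)/p) atTop atTop := by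
  set F : ℕ → ℝ := Set.indicator {p | p.Prime} (fun n => 1/(n:ℝ)) with hF
  have hFnn : ∀ n, 0 ≤ F n := by
    intro n
    rw [hF]
    apply Set.indicator_nonneg
    intro i _
    positivity
  have hns : ¬ Summable F := not_summable_one_div_on_primes
  have hG : Tendsto (fun M => ∑ i ∈ Finset.range M, F i) atTop atTop :=
    (not_summable_iff_tendsto_nat_atTop_of_nonneg hFnn).mp hns
  have hsplit : ∀ m, ∑ i ∈ Finset.range (m+6), F i = 1/2 + ∑ p ∈ Sm m, (1 : ℝ)/p := by
    intro m
    have h1 : ∑ i ∈ Finset.range (m+6), F i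
        = ∑ i ∈ (Finset.range (m+6)).filter (fun p => p.Prime), (1:ℝ)/i := by
      rw [hF, Finset.sum_indicator_eq_sum_filter]
      simp only [Set.mem_setOf_eq]
    have h2 : (Finset.range (m+6)).filter (fun p => p.Prime) = insert 2 (Sm m) := by
      ext p
      simp only [Finset.mem_filter, Finset.mem_insert, Sm, Finset.mem_range]
      constructor
      · rintro ⟨h3, h4⟩
        by_cases h5 : p = 2
        · left; exact h5
        · right; exact ⟨h3, h4, h5⟩
      · rintro (rfl | ⟨h3, h4, h5⟩)
        · exact ⟨by omega, Nat.prime_two⟩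
        · exact ⟨h3, h4⟩
    have h3 : 2 ∉ Sm m := by
      simp [Sm]
    rw [h1, h2, Finset.sum_insert h3]
    norm_num
  have hcomp : Tendsto (fun m => ∑ i ∈ Finset.range (m+6), F i) atTop atTop :=
    hG.comp (tendsto_add_atTop_nat 6)
  have := tendsto_atTop_add_const_right atTop (-(1/2) : ℝ) hcomp
  apply Tendsto.congr ?_ this
  intro m
  rw [hsplit m]
  ring

/-- the product of (1 - 1/p) over odd primes below m tends to 0 -/
lemma aux_prod_tendsto :
    Tendsto (fun m => ∏ p ∈ Sm m, (1 - 1/(p:ℝ))) atTop (nhds 0) := by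
  have hfac : ∀ m, ∀ p ∈ Sm m, (0:ℝ) ≤ 1 - 1/(p:ℝ) := by
    intro m p hp
    have := (Sm_primes m p hp).two_le
    have hp1 : (1:ℝ) ≤ p := by exact_mod_cast (by omega : 1 ≤ p)
    have : 1/(p:ℝ) ≤ 1 := by
      rw [div_le_one (by linarith)]
      linarith
    linarith
  apply squeeze_zero (g := fun m => Real.exp (-(∑ p ∈ Sm m, (1 : ℝ)/p)))
  · intro m
    exact Finset.prod_nonneg (hfac m)
  · intro m
    calc ∏ p ∈ Sm m, (1 - 1/(p:ℝ)) ≤ ∏ p ∈ Sm m, Real.exp (-(1/(p:ℝ))) := by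
          apply Finset.prod_le_prod (hfac m)
          intro p hp
          have := Real.add_one_le_exp (-(1/(p:ℝ)))
          linarith
      _ = Real.exp (∑ p ∈ Sm m, -(1/(p:ℝ))) := (Real.exp_sum _ _).symm
      _ = Real.exp (-(∑ p ∈ Sm m, (1:ℝ)/p)) := by rw [Finset.sum_neg_distrib]
  · exact Real.tendsto_exp_neg_atTop_nhds_zero.comp aux_sum_recip_tendsto

lemma key (q k : ℕ) (hq3 : 3 ≤ q) (hqodd : Odd q) (hks : Squarefree k)
    (hkodd : Odd k) (h3k : 3 ∣ k) (hkphi : k < 2 ^ k.totient) :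
    ∃ N : ℕ, 2*k < N ∧ Odd N ∧ N.Coprime q ∧
      lam q N = 2*k ∧
      (N : ℝ) ≤ ((q:ℝ)+1)^((2*k).totient) ∧
      (-1 : ZMod N) ∈ Submonoid.powers ((q : ZMod N)) ∧
      2 ∣ orderOf ((q : ZMod N)) ∧ ¬ 4 ∣ orderOf ((q : ZMod N)) := by
  have hk3 : 3 ≤ k := Nat.le_of_dvd (Nat.pos_of_ne_zero hks.ne_zero) h3k
  set n : ℕ := 2 * k with hn_def
  have hn2 : 2 < n := by omega
  have hq1 : (1:ℤ) < (q:ℤ) := by exact_mod_cast (by omega : 1 < q)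
  set Cz : ℤ := (cyclotomic n ℤ).eval (q:ℤ) with hCz_def
  have hCz_pos : 0 < Cz := cyclotomic_pos hn2 _
  set C : ℕ := Cz.toNat with hC_def
  have hCcast : (C:ℤ) = Cz := Int.toNat_of_nonneg hCz_pos.le
  have hC0 : C ≠ 0 := by
    intro h; rw [h] at hCcast; omega
  -- C divides q^n - 1
  have hCdvd : (C:ℤ) ∣ (q:ℤ)^n - 1 := by
    rw [hCcast, hCz_def]
    have h1 : cyclotomic n ℤ ∣ X ^ n - 1 := cyclotomic.dvd_X_pow_sub_one n ℤ
    have := eval_dvd (x := (q:ℤ)) h1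
    simpa using this
  -- main quotient divisibility
  have hCdvdG : ∀ m d : ℕ, n = d * m → 1 ≤ d → m ≠ 1 →
      (C:ℤ) ∣ ∑ i ∈ range m, ((q:ℤ)^d)^i := by
    intro m d hnm hd1 hm1
    have hd_mem : d ∈ n.properDivisors := by
      rw [Nat.mem_properDivisors]
      constructor
      · exact ⟨m, hnm⟩
      · have hm2 : 2 ≤ m := by
          rcases Nat.lt_or_ge m 2 with h | h
          · interval_cases m <;> omega
          · exact h
        calc d = d * 1 := (Nat.mul_one d).symm
          _ < d * m := Nat.mul_lt_mul_of_le_of_lt (le_refl d) (by omega) (by omega)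
          _ = n := hnm.symm
    have h1 : (X ^ d - 1) * cyclotomic n ℤ ∣ X ^ n - 1 :=
      X_pow_sub_one_mul_cyclotomic_dvd_X_pow_sub_one_of_dvd ℤ hd_mem
    have h2 : ((q:ℤ)^d - 1) * Cz ∣ (q:ℤ)^n - 1 := by
      have := eval_dvd (x := (q:ℤ)) h1
      simpa [hCz_def] using this
    have hx1 : (1:ℤ) < (q:ℤ)^d := by
      calc (1:ℤ) < (q:ℤ) := hq1
        _ = (q:ℤ)^1 := (pow_one _).symm
        _ ≤ (q:ℤ)^d := pow_le_pow_right₀ (by omega) hd1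
    have hxne : (q:ℤ)^d - 1 ≠ 0 := by omega
    have h3 : (q:ℤ)^n - 1 = ((q:ℤ)^d - 1) * (∑ i ∈ range m, ((q:ℤ)^d)^i) := by
      rw [hnm, pow_mul]
      rw [mul_comm ((q:ℤ)^d - 1)]
      rw [geom_sum_mul]
    rw [h3] at h2
    rw [hCcast]
    exact (mul_dvd_mul_iff_left hxne).mp h2
  -- C is odd
  have hCodd : ¬ 2 ∣ C := by
    obtain ⟨d3, hd3⟩ := h3k
    have hG := hCdvdG 3 (2 * d3) (by omega) (by omega) (by omega)
    intro h2C
    have h2G : (2:ℤ) ∣ ∑ i ∈ range 3, ((q:ℤ)^(2*d3))^i := by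
      exact dvd_trans (by exact_mod_cast Int.natCast_dvd_natCast.mpr h2C) hG
    obtain ⟨y, hy⟩ := hqodd
    have hqz : (q:ℤ) = 2*(y:ℤ)+1 := by exact_mod_cast hy
    have hxodd : Odd ((q:ℤ)^(2*d3)) := by
      apply Odd.pow
      exact ⟨(y:ℤ), by omega⟩
    obtain ⟨z, hz⟩ := hxodd
    have : ∑ i ∈ range 3, ((q:ℤ)^(2*d3))^i = 2*(2*z^2+3*z+1) + 1 := by
      rw [Finset.sum_range_succ, Finset.sum_range_succ, Finset.sum_range_one, hz]
      ring
    rw [this] at h2G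
    omega
  -- no square of an "intrinsic" prime divides C
  have hCp2 : ∀ p : ℕ, p.Prime → p ∣ C → p ∣ n → ¬ (p * p ∣ C) := by
    intro p hp hpC hpn hsq
    have hp2 : p ≠ 2 := by rintro rfl; exact hCodd hpC
    have hpodd : Odd p := hp.odd_of_ne_two hp2
    have hpk : p ∣ k := (Nat.Coprime.dvd_of_dvd_mul_left
      (Nat.coprime_two_right.mpr hpodd) hpn)
    obtain ⟨d', hd'⟩ := hpk
    have hnd : n = (2 * d') * p := by rw [hn_def, hd']; ring
    haveI := Fact.mk hp
    set a : ZMod p := (q : ZMod p) with ha_def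
    have hpCz : (p:ℤ) ∣ (q:ℤ)^n - 1 := dvd_trans (by exact_mod_cast Int.natCast_dvd_natCast.mpr hpC) hCdvd
    have han : a ^ n = 1 := by
      have : (((q:ℤ)^n - 1 : ℤ) : ZMod p) = 0 := by
        rw [ZMod.intCast_zmod_eq_zero_iff_dvd]; exact hpCz
      push_cast at this
      linear_combination this
    have ha0 : a ≠ 0 := by
      intro h
      rw [h, zero_pow (by omega : n ≠ 0)] at han
      exact one_ne_zero han.symm
    have hofd : orderOf a ∣ p - 1 :=
      orderOf_dvd_of_pow_eq_one (ZMod.pow_card_sub_one_eq_one ha0)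
    have hple := hp.two_le
    have hord0 : orderOf a ≠ 0 := by
      intro h; rw [h] at hofd
      have := Nat.eq_zero_of_zero_dvd hofd
      omega
    have hpord : ¬ p ∣ orderOf a := by
      intro h
      have h1 := Nat.le_of_dvd (Nat.pos_of_ne_zero hord0) h
      have h2 := Nat.le_of_dvd (by omega) hofd
      omega
    have hordn : orderOf a ∣ n := orderOf_dvd_of_pow_eq_one han
    have hordd : orderOf a ∣ 2 * d' := by
      rw [hnd] at hordn
      exact Nat.Coprime.dvd_of_dvd_mul_right
        ((hp.coprime_iff_not_dvd.mpr hpord).symm) hordn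
    -- p divides q^(2d') - 1
    have hxd : (p:ℤ) ∣ (q:ℤ)^(2*d') - 1 := by
      have had : a ^ (2*d') = 1 := orderOf_dvd_iff_pow_eq_one.mp hordd
      rw [← ZMod.intCast_zmod_eq_zero_iff_dvd]
      push_cast
      rw [← ha_def] at *
      linear_combination had
    have hGdvd := hCdvdG p (2*d') hnd (by
      have : d' ≠ 0 := by rintro rfl; omega
      omega) (by omega)
    have hnot := aux_geom_sum_not_dvd hp hpodd (x := (q:ℤ)^(2*d')) hxd
    apply hnot
    have hpsq : ((p:ℤ))^2 ∣ (C:ℤ) := by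
      have : ((p*p : ℕ) : ℤ) ∣ (C:ℤ) := Int.natCast_dvd_natCast.mpr hsq
      push_cast at this
      calc ((p:ℤ))^2 = (p:ℤ)*(p:ℤ) := sq (p:ℤ)
        _ ∣ (C:ℤ) := this
    exact dvd_trans hpsq hGdvd
  -- the set of good primes
  set P : Finset ℕ := C.primeFactors \ n.primeFactors with hP_def
  have hPprime : ∀ p ∈ P, p.Prime := by
    intro p hp
    exact Nat.prime_of_mem_primeFactors (Finset.mem_sdiff.mp hp).1
  have hPdvdC : ∀ p ∈ P, p ∣ C := by
    intro p hp
    exact Nat.dvd_of_mem_primeFactors (Finset.mem_sdiff.mp hp).1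
  have hPnotn : ∀ p ∈ P, ¬ p ∣ n := by
    intro p hp hdvd
    have h1 := (Finset.mem_sdiff.mp hp).2
    exact h1 (Nat.mem_primeFactors.mpr ⟨hPprime p hp, hdvd, by omega⟩)
  -- each good prime gives order exactly n
  have hPord : ∀ p ∈ P, orderOf ((q:ℕ) : ZMod p) = n := by
    intro p hp
    have hpp := hPprime p hp
    haveI := Fact.mk hpp
    haveI : NeZero ((n:ℕ) : ZMod p) := ⟨by
      intro h
      exact hPnotn p hp ((ZMod.natCast_eq_zero_iff n p).mp h)⟩
    have hpCz : (p:ℤ) ∣ Cz := by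
      rw [← hCcast]
      exact_mod_cast Int.natCast_dvd_natCast.mpr (hPdvdC p hp)
    have hroot : (cyclotomic n (ZMod p)).IsRoot ((q:ℕ) : ZMod p) := by
      have hmap : cyclotomic n (ZMod p) = (cyclotomic n ℤ).map (Int.castRingHom (ZMod p)) :=
        (map_cyclotomic_int n (ZMod p)).symm
      rw [IsRoot, hmap]
      have := eval_intCast_map (Int.castRingHom (ZMod p)) (cyclotomic n ℤ) (q:ℤ)
      have hcast : (((q:ℤ) : ℤ) : ZMod p) = ((q:ℕ) : ZMod p) := by push_cast; rfl
      rw [hcast] at this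
      rw [this]
      have : ((Cz : ℤ) : ZMod p) = 0 := by
        rw [ZMod.intCast_zmod_eq_zero_iff_dvd]; exact hpCz
      simpa [hCz_def] using this
    have hprim : IsPrimitiveRoot ((q:ℕ) : ZMod p) n := isRoot_cyclotomic_iff.mp hroot
    exact hprim.eq_orderOf.symm
  have hPodd : ∀ p ∈ P, Odd p := by
    intro p hp
    refine (hPprime p hp).odd_of_ne_two ?_
    rintro rfl
    exact hCodd (hPdvdC 2 hp)
  -- each good prime is > n
  have hPgt : ∀ p ∈ P, n < p := by
    intro p hp
    have hpp := hPprime p hp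
    haveI := Fact.mk hpp
    set a : ZMod p := ((q:ℕ) : ZMod p) with ha_def
    have ha0 : a ≠ 0 := by
      intro h
      have h1 := hPord p hp
      rw [← ha_def, h] at h1
      rw [orderOf_eq_zero_iff.mpr ?_] at h1
      · omega
      · intro hfin
        obtain ⟨m, hm0, hm⟩ := hfin.exists_pow_eq_one
        rw [zero_pow (by omega)] at hm
        exact one_ne_zero hm.symm
    have hofd : orderOf a ∣ p - 1 :=
      orderOf_dvd_of_pow_eq_one (ZMod.pow_card_sub_one_eq_one ha0)
    have h1 := hPord p hp
    rw [← ha_def] at h1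
    rw [h1] at hofd
    have := Nat.le_of_dvd (by have := hpp.two_le; omega) hofd
    omega
  -- P is nonempty
  have hPne : P.Nonempty := by
    by_contra hemp
    rw [Finset.not_nonempty_iff_eq_empty] at hemp
    have hsub : C.primeFactors ⊆ n.primeFactors := by
      intro p hp
      by_contra h
      have : p ∈ P := Finset.mem_sdiff.mpr ⟨hp, h⟩
      rw [hemp] at this
      exact absurd this (Finset.notMem_empty p)
    have hCsq : Squarefree C := by
      rw [Nat.squarefree_iff_prime_squarefree]
      intro p hpp hdvd
      have hpC : p ∣ C := dvd_trans (Dvd.intro p rfl) hdvd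
      have hpn : p ∣ n := Nat.dvd_of_mem_primeFactors
        (hsub (Nat.mem_primeFactors.mpr ⟨hpp, hpC, hC0⟩))
      exact hCp2 p hpp hpC hpn hdvd
    have hCk : C ∣ k := by
      rw [← Nat.prod_primeFactors_of_squarefree hCsq]
      apply Finset.prod_primes_dvd
      · intro p hp
        exact (Nat.prime_of_mem_primeFactors hp).prime
      · intro p hp
        have hpp := Nat.prime_of_mem_primeFactors hp
        have hpn : p ∣ n := Nat.dvd_of_mem_primeFactors (hsub hp)
        have hp2 : p ≠ 2 := by
          rintro rfl
          exact hCodd (Nat.dvd_of_mem_primeFactors hp)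
        exact Nat.Coprime.dvd_of_dvd_mul_left
          (Nat.coprime_two_right.mpr (hpp.odd_of_ne_two hp2)) hpn
    have hCk' : C ≤ k := Nat.le_of_dvd (by omega) hCk
    -- but C > k
    have hlow : (q - 1) ^ n.totient < C := by
      have := Polynomial.sub_one_pow_totient_lt_natAbs_cyclotomic_eval
        (n := n) (q := q) (by omega) (by omega)
      have hnat : Cz.natAbs = C := by
        have := Int.natAbs_of_nonneg hCz_pos.le
        omega
      rw [← hCz_def] at this
      rw [hnat] at this
      exact this
    have hphi : n.totient = k.totient := by
      rw [hn_def, Nat.totient_mul (Nat.coprime_two_left.mpr hkodd), Nat.totient_two, one_mul]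
    have h2low : 2 ^ k.totient ≤ (q-1) ^ n.totient := by
      rw [hphi]
      exact Nat.pow_le_pow_left (by omega) _
    omega
  -- define N
  set N : ℕ := ∏ p ∈ P, p with hN_def
  have hNfact : N.primeFactors = P := Nat.primeFactors_prod hPprime
  have hN0 : N ≠ 0 := by
    rw [hN_def]
    exact Finset.prod_ne_zero_iff.mpr (fun p hp => (hPprime p hp).ne_zero)
  have hNgt : 2 * k < N := by
    obtain ⟨p, hp⟩ := hPne
    have h1 : p ∣ N := Finset.dvd_prod_of_mem _ hp
    have h2 := Nat.le_of_dvd (Nat.pos_of_ne_zero hN0) h1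
    have := hPgt p hp
    omega
  have hNodd : Odd N := by
    rw [hN_def]
    exact Finset.prod_induction _ Odd (fun a b => Odd.mul) odd_one hPodd
  -- q is invertible mod each good prime
  have hPnotq : ∀ p ∈ P, ¬ p ∣ q := by
    intro p hp hdvd
    have hpp := hPprime p hp
    haveI := Fact.mk hpp
    have h1 := hPord p hp
    have h0 : ((q:ℕ) : ZMod p) = 0 := (ZMod.natCast_eq_zero_iff q p).mpr hdvd
    rw [h0] at h1
    rw [orderOf_eq_zero_iff.mpr ?_] at h1
    · omega
    · intro hfin
      obtain ⟨m, hm0, hm⟩ := hfin.exists_pow_eq_one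
      rw [zero_pow (by omega)] at hm
      exact one_ne_zero hm.symm
  have hNcop : N.Coprime q := by
    by_contra h
    obtain ⟨p, hpp, hpd⟩ := Nat.exists_prime_and_dvd h
    have h1 : p ∣ N := hpd.trans (Nat.gcd_dvd_left N q)
    have h2 : p ∣ q := hpd.trans (Nat.gcd_dvd_right N q)
    have : p ∈ P := by
      rw [← hNfact]
      exact Nat.mem_primeFactors.mpr ⟨hpp, h1, hN0⟩
    exact hPnotq p this h2
  -- N divides q^k + 1
  have hNdvd : N ∣ q^k + 1 := by
    rw [hN_def]
    apply Finset.prod_primes_dvd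
    · intro p hp; exact (hPprime p hp).prime
    · intro p hp
      have hpp := hPprime p hp
      haveI := Fact.mk hpp
      set a : ZMod p := ((q:ℕ) : ZMod p) with ha_def
      have h2k : a ^ n = 1 := by
        rw [← hPord p hp]; exact pow_orderOf_eq_one a
      have hsq : a^k * a^k = 1 := by
        rw [← pow_add]
        have : k + k = n := by omega
        rw [this]; exact h2k
      have hk1 : a ^ k = -1 := by
        rcases mul_self_eq_one_iff.mp hsq with h | h
        · exfalso
          have : orderOf a ∣ k := orderOf_dvd_of_pow_eq_one h
          rw [hPord p hp] at this
          have := Nat.le_of_dvd (by omega) this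
          omega
        · exact h
      have : ((q^k + 1 : ℕ) : ZMod p) = 0 := by
        push_cast
        rw [← ha_def] at *
        linear_combination hk1
      exact (ZMod.natCast_eq_zero_iff _ p).mp this
  have hN2 : 2 < N := by omega
  -- q^k = -1 mod N
  have hqkN : ((q:ℕ) : ZMod N)^k = -1 := by
    have : ((q^k + 1 : ℕ) : ZMod N) = 0 := (ZMod.natCast_eq_zero_iff _ N).mpr hNdvd
    push_cast at this
    linear_combination this
  have hq2kN : ((q:ℕ) : ZMod N)^n = 1 := by
    have : n = k * 2 := by omega
    rw [this, pow_mul, hqkN]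
    ring
  -- order facts mod N
  have hordN : orderOf ((q:ℕ) : ZMod N) ∣ n := orderOf_dvd_of_pow_eq_one hq2kN
  have hordNk : ¬ orderOf ((q:ℕ) : ZMod N) ∣ k := by
    intro h
    have h1 : ((q:ℕ) : ZMod N)^k = 1 := orderOf_dvd_iff_pow_eq_one.mp h
    rw [hqkN] at h1
    have h2 : ((2:ℕ) : ZMod N) = 0 := by push_cast; linear_combination -h1
    have := (ZMod.natCast_eq_zero_iff 2 N).mp h2
    have := Nat.le_of_dvd (by omega) this
    omega
  have hord2 : 2 ∣ orderOf ((q:ℕ) : ZMod N) := by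
    by_contra h
    have hcop : Nat.Coprime (orderOf ((q:ℕ) : ZMod N)) 2 := by
      rcases Nat.coprime_or_dvd_of_prime Nat.prime_two (orderOf ((q:ℕ) : ZMod N)) with hc | hc
      · exact hc.symm
      · exact absurd hc h
    exact hordNk (Nat.Coprime.dvd_of_dvd_mul_left hcop hordN)
  have hord4 : ¬ 4 ∣ orderOf ((q:ℕ) : ZMod N) := by
    intro h
    have h1 : 4 ∣ n := dvd_trans h hordN
    obtain ⟨j, hj⟩ := hkodd
    omega
  -- lam
  have hlam : lam q N = n := by
    have himg : (fun p => orderOf ((q:ℕ) : ZMod p)) '' ↑N.primeFactors = {n} := by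
      rw [hNfact]
      ext x
      simp only [Set.mem_image, Finset.mem_coe, Set.mem_singleton_iff]
      constructor
      · rintro ⟨p, hp, rfl⟩
        exact hPord p hp
      · rintro rfl
        obtain ⟨p, hp⟩ := hPne
        exact ⟨p, hp, hPord p hp⟩
    rw [lam, himg]
    exact csInf_singleton n
  -- upper bound on N
  have hNC : N ∣ C := by
    rw [hN_def]
    exact Finset.prod_primes_dvd C (fun p hp => (hPprime p hp).prime) hPdvdC
  have hNleC : N ≤ C := Nat.le_of_dvd (Nat.pos_of_ne_zero hC0) hNC
  have hupper : (N : ℝ) ≤ ((q:ℝ)+1)^(n.totient) := by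
    have h1 : (Cz : ℝ) = (cyclotomic n ℝ).eval (q:ℝ) := by
      have := Polynomial.cyclotomic.eval_apply (R := ℤ) (q:ℤ) n (algebraMap ℤ ℝ)
      simpa [hCz_def] using this.symm
    have h2 : (cyclotomic n ℝ).eval (q:ℝ) ≤ ((q:ℝ)+1)^(n.totient) :=
      Polynomial.cyclotomic_eval_le_add_one_pow_totient (by exact_mod_cast (by omega : 1 < q)) n
    calc (N:ℝ) ≤ (C:ℝ) := by exact_mod_cast hNleC
      _ = (Cz:ℝ) := by rw [← hCcast]; push_cast; ring
      _ ≤ ((q:ℝ)+1)^(n.totient) := by rw [h1]; exact h2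
  exact ⟨N, hNgt, hNodd, hNcop, hlam, hupper, ⟨k, hqkN⟩, hord2, hord4⟩


/-- Assume the prime power `q` is odd and `4 ∤ q − 1`. Then there are
odd integers `n₁ < n₂ < ⋯`, each `> 1` and coprime to `q`, such that (i)
`log_q(n_i)/λ(n_i) → 0`; (ii) `−1` lies in the cyclic subgroup of `(ℤ/n_iℤ)ˣ` generated
by `q`; and (iii) the multiplicative order of `q` mod `n_i` is divisible by 2 but not
by 4. -/
theorem consta_dihedral_stmt17 (q : ℕ) (hq : IsPrimePow q) (hodd : Odd q)
    (h4 : ¬ 4 ∣ q - 1) :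
    ∃ nseq : ℕ → ℕ, StrictMono nseq ∧
      (∀ i, 1 < nseq i ∧ Odd (nseq i) ∧ Nat.Coprime (nseq i) q) ∧
      Filter.Tendsto (fun i => Real.logb q (nseq i) / (lam q (nseq i) : ℝ))
        Filter.atTop (nhds 0) ∧
      ∀ i, (-1 : ZMod (nseq i)) ∈ Submonoid.powers ((q : ZMod (nseq i))) ∧
        2 ∣ orderOf ((q : ZMod (nseq i))) ∧ ¬ 4 ∣ orderOf ((q : ZMod (nseq i))) := by
  have hq2 := hq.two_le
  have hqne2 : q ≠ 2 := by rintro rfl; exact (by decide : ¬ Odd 2) hodd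
  have hq3 : 3 ≤ q := by omega
  have hq1R : (1:ℝ) < (q:ℝ) := by exact_mod_cast (by omega : 1 < q)
  have hkey := fun m => key q (kk m) hq3 hodd (kk_sqfree m) (kk_odd m) (kk_3dvd m) (kk_lt_pow m)
  choose N hN using hkey
  have hNgt : ∀ m, 2 * kk m < N m := fun m => (hN m).1
  have hNodd : ∀ m, Odd (N m) := fun m => (hN m).2.1
  have hNcop : ∀ m, (N m).Coprime q := fun m => (hN m).2.2.1
  have hNlam : ∀ m, lam q (N m) = 2 * kk m := fun m => (hN m).2.2.2.1
  have hNle : ∀ m, (N m : ℝ) ≤ ((q:ℝ)+1)^((2 * kk m).totient) := fun m => (hN m).2.2.2.2.1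
  have hkk3 : ∀ m, 3 ≤ kk m := fun m => Nat.le_of_dvd
    (Nat.pos_of_ne_zero (kk_sqfree m).ne_zero) (kk_3dvd m)
  have hN1 : ∀ m, 1 < N m := fun m => by have := hNgt m; have := hkk3 m; omega
  -- the ratio tends to 0
  have hratio : Tendsto (fun m => Real.logb q (N m) / (lam q (N m) : ℝ)) atTop (nhds 0) := by
    apply squeeze_zero (g := fun m => ∏ p ∈ Sm m, (1 - 1/(p:ℝ)))
    · intro m
      apply div_nonneg
      · exact Real.logb_nonneg hq1R (by exact_mod_cast (hN1 m).le)
      · positivity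
    · intro m
      rw [hNlam m]
      have hkpos : 0 < kk m := by have := hkk3 m; omega
      have hphi : (2 * kk m).totient = (kk m).totient := by
        rw [Nat.totient_mul (Nat.coprime_two_left.mpr (kk_odd m)), Nat.totient_two, one_mul]
      have hlogb2 : Real.logb q ((q:ℝ)+1) ≤ 2 := by
        calc Real.logb q ((q:ℝ)+1) ≤ Real.logb q ((q:ℝ)^(2:ℕ)) := by
              apply Real.logb_le_logb_of_le hq1R (by linarith)
              have h3R : (3:ℝ) ≤ (q:ℝ) := by exact_mod_cast hq3
              nlinarith
          _ = (2:ℕ) * Real.logb q (q:ℝ) := Real.logb_pow _ _ _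
          _ = 2 := by rw [Real.logb_self_eq_one hq1R]; norm_num
      have h1 : Real.logb q (N m) ≤ ((kk m).totient : ℝ) * 2 := by
        calc Real.logb q (N m)
            ≤ Real.logb q (((q:ℝ)+1)^((2 * kk m).totient)) :=
              Real.logb_le_logb_of_le hq1R (by exact_mod_cast (by have := hN1 m; omega : 0 < N m)) (hNle m)
          _ = ((2 * kk m).totient : ℝ) * Real.logb q ((q:ℝ)+1) := Real.logb_pow _ _ _
          _ ≤ ((kk m).totient : ℝ) * 2 := by
              rw [hphi]
              apply mul_le_mul_of_nonneg_left hlogb2 (by positivity)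
      have hden : (0:ℝ) < ((2 * kk m : ℕ) : ℝ) := by
        have : (0:ℕ) < 2 * kk m := by omega
        exact_mod_cast this
      have h2 : (((kk m).totient : ℝ) * 2) / ((2 * kk m : ℕ) : ℝ)
          = ∏ p ∈ Sm m, (1 - 1/(p:ℝ)) := by
        have hkkcast : ((2 * kk m : ℕ) : ℝ) = 2 * ((kk m : ℕ) : ℝ) := by push_cast; ring
        rw [hkkcast]
        rw [mul_comm (((kk m).totient : ℝ)) 2, mul_div_mul_left _ _ (two_ne_zero)]
        rw [kk_totient, kk]
        rw [Nat.cast_prod, Nat.cast_prod]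
        rw [← Finset.prod_div_distrib]
        apply Finset.prod_congr rfl
        intro p hp
        have hp2 := (Sm_primes m p hp).two_le
        have hpR : (0:ℝ) < (p:ℝ) := by exact_mod_cast (by omega : 0 < p)
        have : ((p - 1 : ℕ) : ℝ) = (p:ℝ) - 1 := by
          rw [Nat.cast_sub (by omega)]; norm_num
        rw [this, sub_div, div_self (ne_of_gt hpR)]
      calc Real.logb q (N m) / ((2 * kk m : ℕ) : ℝ)
          ≤ (((kk m).totient : ℝ) * 2) / ((2 * kk m : ℕ) : ℝ) :=
            div_le_div_of_nonneg_right h1 hden.le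
        _ = ∏ p ∈ Sm m, (1 - 1/(p:ℝ)) := h2
    · exact aux_prod_tendsto
  -- N tends to infinity
  have hkkmono : Monotone kk := by
    intro a b hab
    apply Finset.prod_le_prod_of_subset_of_one_le'
    · exact Finset.filter_subset_filter _ (Finset.range_subset_range.mpr (by omega))
    · intro p hp _
      exact (Sm_primes b p hp).one_lt.le
  have hkkT : Tendsto kk atTop atTop :=
    tendsto_atTop_atTop_of_monotone hkkmono kk_unbounded
  have hNT : Tendsto N atTop atTop :=
    tendsto_atTop_mono (fun m => by have := hNgt m; omega) hkkT
  -- extract a strictly monotone subsequence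
  have H : ∀ j : ℕ, ∃ m, j < m ∧ N j < N m := by
    intro j
    have h1 : ∀ᶠ m in atTop, j < m ∧ N j < N m :=
      (eventually_gt_atTop j).and (hNT.eventually (eventually_gt_atTop (N j)))
    exact h1.exists
  let g : ℕ → ℕ := fun i => Nat.rec 0 (fun _ prev => (H prev).choose) i
  have hg : ∀ i, g i < g (i+1) ∧ N (g i) < N (g (i+1)) := by
    intro i
    have h1 : g (i+1) = (H (g i)).choose := rfl
    have h2 := (H (g i)).choose_spec
    rw [h1]
    exact h2
  have hgsm : StrictMono g := strictMono_nat_of_lt_succ (fun i => (hg i).1)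
  refine ⟨fun i => N (g i), strictMono_nat_of_lt_succ (fun i => (hg i).2), ?_, ?_, ?_⟩
  · intro i
    exact ⟨hN1 (g i), hNodd (g i), hNcop (g i)⟩
  · exact hratio.comp hgsm.tendsto_atTop
  · intro i
    exact ⟨(hN (g i)).2.2.2.2.2.1, (hN (g i)).2.2.2.2.2.2.1, (hN (g i)).2.2.2.2.2.2.2⟩

end CDC
end
end

section
/- Let ε be a primitive idempotent of R_n with σ(ε) ≠ ε, and set e = ψ(ε), ē = ψ(σ(ε)) ∈ FG. Then e + ē is a central idempotent of FG; K := R_n/(1−ε)R_n is a finite field (a field extension of F); and there exists an injective F-linear multiplicative map Φ : M₂(K) → FG with Φ(I₂) = e + ē, whose image is the two-sided ideal FG·(e + ē), and which satisfies bar(Φ([[a,b],[c,d]])) = Φ([[d,b],[c,a]]) for all a, b, c, d ∈ K. -/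
open Polynomial

noncomputable section

namespace CDC

set_option maxHeartbeats 1000000
set_option synthInstance.maxHeartbeats 400000

/-- the bar map of a group algebra: the `F`-linear anti-automorphism sending each group
element `g` to `g⁻¹`. -/
def barFG {F G : Type*} [Field F] [Group G] (a : MonoidAlgebra F G) : MonoidAlgebra F G :=
  MonoidAlgebra.ofCoeff (Finsupp.mapDomain (fun g => g⁻¹) a.coeff)

lemma barFG_add {F G : Type*} [Field F] [Group G] (x y : MonoidAlgebra F G) :
    barFG (x + y) = barFG x + barFG y := by
  unfold barFG; rw [MonoidAlgebra.coeff_add, Finsupp.mapDomain_add, MonoidAlgebra.ofCoeff_add]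

lemma barFG_smul {F G : Type*} [Field F] [Group G] (c : F) (x : MonoidAlgebra F G) :
    barFG (c • x) = c • barFG x := by
  unfold barFG; rw [MonoidAlgebra.coeff_smul, Finsupp.mapDomain_smul, MonoidAlgebra.ofCoeff_smul]

lemma barFG_single {F G : Type*} [Field F] [Group G] (g : G) (c : F) :
    barFG (MonoidAlgebra.single g c) = MonoidAlgebra.single g⁻¹ c := by
  unfold barFG; rw [MonoidAlgebra.coeff_single, Finsupp.mapDomain_single, MonoidAlgebra.ofCoeff_single]

lemma barFG_mul {F G : Type*} [Field F] [Group G] (x y : MonoidAlgebra F G) :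
    barFG (x * y) = barFG y * barFG x := by
  induction x using MonoidAlgebra.induction_on with
  | of g =>
    induction y using MonoidAlgebra.induction_on with
    | of h =>
      simp only [MonoidAlgebra.of_apply, MonoidAlgebra.single_mul_single, barFG_single,
        mul_inv_rev, one_mul, mul_one]
    | add y1 y2 h1 h2 => rw [mul_add, barFG_add, h1, h2, barFG_add, add_mul]
    | smul c y h => rw [mul_smul_comm, barFG_smul, h, barFG_smul, smul_mul_assoc]
  | add x1 x2 h1 h2 => rw [add_mul, barFG_add, h1, h2, barFG_add, mul_add]
  | smul c x h => rw [smul_mul_assoc, barFG_smul, h, barFG_smul, mul_smul_comm]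

lemma exists_idem_pow_aux {M : Type*} [Monoid M] (a : M) (i j : ℕ) (hij : i < j)
    (h : a ^ i = a ^ j) : ∃ m, 0 < m ∧ a ^ m * a ^ m = a ^ m := by
  set d := j - i with hd
  have hd0 : 0 < d := by omega
  have hbase : ∀ s, i ≤ s → a ^ (s + d) = a ^ s := by
    intro s hs
    have h1 : s + d = j + (s - i) := by omega
    have h2 : s = i + (s - i) := by omega
    rw [h1, pow_add, ← h, ← pow_add, ← h2]
  have hstep : ∀ k, ∀ s, i ≤ s → a ^ (s + k * d) = a ^ s := by
    intro k
    induction k with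
    | zero => simp
    | succ k ih =>
      intro s hs
      have h1 : s + (k + 1) * d = (s + d) + k * d := by ring
      rw [h1, ih _ (by omega), hbase s hs]
  refine ⟨(i + 1) * d, by positivity, ?_⟩
  rw [← pow_add]
  exact hstep (i + 1) _ (le_trans (by omega) (Nat.le_mul_of_pos_right _ hd0))

lemma exists_idem_pow {M : Type*} [Monoid M] [Finite M] (a : M) :
    ∃ m, 0 < m ∧ a ^ m * a ^ m = a ^ m := by
  obtain ⟨i, j, hne, hij⟩ := Finite.exists_ne_map_eq_of_infinite (fun k : ℕ => a ^ k)
  rcases hne.lt_or_gt with h | h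
  · exact exists_idem_pow_aux a i j h hij
  · exact exists_idem_pow_aux a j i h hij.symm

/-- Let `ε` be a primitive idempotent of `R_n` with `σ(ε) ≠ ε` and set
`e = ψ(ε)`, `ē = ψ(σ(ε)) ∈ FG`, `G` the dihedral group of order `2n`. Then `e + ē` is a
central idempotent of `FG`; `K := R_n/(1−ε)R_n` is a finite field; and there is an
injective `F`-linear multiplicative map `Φ : M₂(K) → FG` with `Φ(I₂) = e + ē`, image the
two-sided ideal `FG·(e + ē)`, and `bar(Φ [[a,b],[c,d]]) = Φ [[d,b],[c,a]]`. -/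
theorem consta_dihedral_stmt18 {F : Type*} [Field F] [Fintype F] (q : ℕ)
    (hq : q = Fintype.card F) (n : ℕ) (hn : 1 < n) (hodd : Odd n)
    (hcop : Nat.Coprime n q)
    (σ : AdjoinRoot (X ^ n - 1 : F[X]) ≃ₐ[F] AdjoinRoot (X ^ n - 1 : F[X]))
    (hσ : σ (AdjoinRoot.root _) = (AdjoinRoot.root _) ^ (n - 1))
    (ψ : AdjoinRoot (X ^ n - 1 : F[X]) →ₐ[F] MonoidAlgebra F (DihedralGroup n))
    (hψ : ψ (AdjoinRoot.root _) = MonoidAlgebra.of F (DihedralGroup n) (DihedralGroup.r 1))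
    (hbarψ : ∀ a, barFG (ψ a) = ψ (σ a))
    (ε : AdjoinRoot (X ^ n - 1 : F[X])) (hprim : IsPrimitiveIdem ε) (hε : σ ε ≠ ε) :
    (IsIdempotentElem (ψ ε + ψ (σ ε)) ∧
      ∀ z : MonoidAlgebra F (DihedralGroup n),
        (ψ ε + ψ (σ ε)) * z = z * (ψ ε + ψ (σ ε))) ∧
    Finite (AdjoinRoot (X ^ n - 1 : F[X]) ⧸ Ideal.span {1 - ε}) ∧
    IsField (AdjoinRoot (X ^ n - 1 : F[X]) ⧸ Ideal.span {1 - ε}) ∧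
    ∃ Φ : Matrix (Fin 2) (Fin 2) (AdjoinRoot (X ^ n - 1 : F[X]) ⧸ Ideal.span {1 - ε})
        →ₗ[F] MonoidAlgebra F (DihedralGroup n),
      Function.Injective Φ ∧
      Φ 1 = ψ ε + ψ (σ ε) ∧
      (∀ m m', Φ (m * m') = Φ m * Φ m') ∧
      Set.range Φ = Set.range (fun z : MonoidAlgebra F (DihedralGroup n) =>
        z * (ψ ε + ψ (σ ε))) ∧
      ∀ a b c d : AdjoinRoot (X ^ n - 1 : F[X]) ⧸ Ideal.span {1 - ε},
        barFG (Φ !![a, b; c, d]) = Φ !![d, b; c, a] := by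
  classical
  haveI : NeZero n := ⟨by omega⟩
  have hn0 : n ≠ 0 := by omega
  obtain ⟨hidem, hε0, hprim'⟩ := hprim
  -- basic char fact
  have hnF : (n : F) ≠ 0 := by
    intro h0
    obtain ⟨p, hchar⟩ := CharP.exists F
    haveI := hchar
    obtain ⟨k, hp, hcard⟩ := FiniteField.card F p
    have hpn : p ∣ n := (CharP.cast_eq_zero_iff F p n).mp h0
    have hpq : p ∣ q := by rw [hq, hcard]; exact dvd_pow_self p k.ne_zero
    have h1 : p ∣ 1 := hcop ▸ Nat.dvd_gcd hpn hpq
    exact hp.one_lt.ne' (Nat.dvd_one.mp h1)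
  have hmonic : (X ^ n - 1 : F[X]).Monic := by
    simpa using Polynomial.monic_X_pow_sub_C (1 : F) hn0
  have hsqf : Squarefree (X ^ n - 1 : F[X]) := by
    have := Polynomial.separable_X_pow_sub_C (1 : F) hnF one_ne_zero
    simpa using this.squarefree
  -- root^n = 1
  have hroot : (AdjoinRoot.root (X ^ n - 1 : F[X])) ^ n = 1 := by
    have := AdjoinRoot.mk_self (f := (X ^ n - 1 : F[X]))
    rwa [map_sub, map_pow, AdjoinRoot.mk_X, map_one, sub_eq_zero] at this
  -- σ is an involution
  have hσσ : ∀ a, σ (σ a) = a := by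
    have : (σ.toAlgHom.comp σ.toAlgHom) = AlgHom.id F _ := by
      apply AdjoinRoot.algHom_ext
      simp only [AlgHom.coe_comp, AlgEquiv.toAlgHom_eq_coe, AlgHom.coe_coe, Function.comp_apply,
        AlgHom.coe_id, id_eq]
      show σ (σ (AdjoinRoot.root _)) = _
      rw [hσ, map_pow, hσ, ← pow_mul]
      obtain ⟨m, hm⟩ : ∃ m, n = 2 + m := ⟨n - 2, by omega⟩
      have h1 : (n - 1) * (n - 1) = n * (n - 2) + 1 := by
        rw [hm]
        have e1 : 2 + m - 1 = m + 1 := by omega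
        have e2 : 2 + m - 2 = m := by omega
        rw [e1, e2]; ring
      rw [h1, pow_add, pow_mul, hroot, one_pow, one_mul, pow_one]
    intro a
    exact AlgHom.congr_fun this a
  -- orthogonality ε σ(ε) = 0
  have hidemσ : IsIdempotentElem (σ ε) := by
    show σ ε * σ ε = σ ε
    rw [← map_mul, hidem]
  have horth : ε * σ ε = 0 := by
    by_contra ht0
    have hεt : (ε - ε * σ ε) * (ε - ε * σ ε) = ε - ε * σ ε := by
      have h3 : (ε - ε * σ ε) * (ε - ε * σ ε)
          = ε * ε - (ε * ε) * σ ε - (ε * ε) * σ ε + (ε * ε) * (σ ε * σ ε) := by ring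
      rw [h3, hidem, hidemσ]; ring
    have ht : (ε * σ ε) * (ε * σ ε) = ε * σ ε := by
      have h3 : (ε * σ ε) * (ε * σ ε) = (ε * ε) * (σ ε * σ ε) := by ring
      rw [h3, hidem, hidemσ]
    have h4 : (ε * σ ε) * (ε - ε * σ ε) = 0 := by
      have h3 : (ε * σ ε) * (ε - ε * σ ε) = (ε * ε) * σ ε - (ε * ε) * (σ ε * σ ε) := by ring
      rw [h3, hidem, hidemσ]; ring
    have h6 : ε - ε * σ ε = 0 := by
      by_contra hne
      exact hprim' ⟨_, _, ht, hεt, ht0, hne, h4, by ring⟩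
    have h7 : ε = ε * σ ε := by rwa [sub_eq_zero] at h6
    apply hε
    have h8 := congrArg σ h7
    rw [map_mul, hσσ] at h8
    calc σ ε = σ ε * σ ε * ε := by rw [hidemσ, ← h8]
    _ = (ε * σ ε) * σ ε := by ring
    _ = ε := by rw [← h7, ← h7]
  -- the reflection element
  have hsr : (DihedralGroup.sr 0 : DihedralGroup n) * DihedralGroup.sr 0 = 1 := by
    rw [DihedralGroup.sr_mul_sr, sub_zero, ← DihedralGroup.one_def]
  set V : MonoidAlgebra F (DihedralGroup n) :=
    MonoidAlgebra.of F (DihedralGroup n) (DihedralGroup.sr 0) with hVdef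
  have hVV : V * V = 1 := by rw [hVdef, ← map_mul, hsr, map_one]
  have hVV2 : ∀ z : MonoidAlgebra F (DihedralGroup n), V * (V * z) = z := fun z => by
    rw [← mul_assoc, hVV, one_mul]
  -- conjugation by V as an algebra homomorphism
  let conjv : MonoidAlgebra F (DihedralGroup n) →ₐ[F] MonoidAlgebra F (DihedralGroup n) :=
    { toFun := fun z => V * z * V
      map_one' := by show V * 1 * V = 1; rw [mul_one, hVV]
      map_mul' := fun a b => by
        show V * (a * b) * V = (V * a * V) * (V * b * V)
        simp only [mul_assoc, hVV2]
      map_zero' := by show V * 0 * V = 0; rw [mul_zero, zero_mul]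
      map_add' := fun a b => by
        show V * (a + b) * V = V * a * V + V * b * V
        rw [mul_add, add_mul]
      commutes' := fun c => by
        show V * (algebraMap F _ c) * V = algebraMap F _ c
        rw [Algebra.algebraMap_eq_smul_one, mul_smul_comm, smul_mul_assoc, mul_one, hVV] }
  have hconj : ∀ a, V * ψ a * V = ψ (σ a) := by
    have hext : conjv.comp ψ = ψ.comp σ.toAlgHom := by
      apply AdjoinRoot.algHom_ext
      show V * ψ (AdjoinRoot.root _) * V = ψ (σ.toAlgHom (AdjoinRoot.root _))
      have h2 : σ.toAlgHom (AdjoinRoot.root (X ^ n - 1 : F[X])) = σ (AdjoinRoot.root _) := rfl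
      rw [h2, hσ, map_pow, hψ, ← map_pow, DihedralGroup.r_one_pow, hVdef, ← map_mul, ← map_mul]
      congr 1
      rw [DihedralGroup.sr_mul_r, zero_add, DihedralGroup.sr_mul_sr]
      congr 1
      rw [Nat.cast_sub (by omega : 1 ≤ n), ZMod.natCast_self, Nat.cast_one, zero_sub]
    intro a
    exact AlgHom.congr_fun hext a
  -- the quotient ring K and the embedding lam of K into the corner e·FG·e
  have hmksurj : Function.Surjective (Ideal.Quotient.mk (Ideal.span {1 - ε})) :=
    Ideal.Quotient.mk_surjective
  set mkk := Ideal.Quotient.mk (Ideal.span {1 - ε}) with hmkkdef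
  set lam : (AdjoinRoot (X ^ n - 1 : F[X]) ⧸ Ideal.span {1 - ε}) →
      MonoidAlgebra F (DihedralGroup n) :=
    fun k => ψ (ε * (hmksurj k).choose) with hlamdef
  have hlam : ∀ y, lam (mkk y) = ψ (ε * y) := by
    intro y
    have hy : mkk (hmksurj (mkk y)).choose = mkk y := (hmksurj (mkk y)).choose_spec
    rw [Ideal.Quotient.eq] at hy
    obtain ⟨w, hw⟩ := Ideal.mem_span_singleton.mp hy
    show ψ (ε * (hmksurj (mkk y)).choose) = ψ (ε * y)
    congr 1
    calc ε * (hmksurj (mkk y)).choose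
        = ε * y + ε * ((hmksurj (mkk y)).choose - y) := by ring
      _ = ε * y + (ε - ε * ε) * w := by rw [hw]; ring
      _ = ε * y := by rw [hidem]; ring
  have hlam0 : lam 0 = 0 := by
    have h := hlam 0
    rwa [map_zero, mul_zero, map_zero] at h
  have hmkε : mkk ε = 1 := by
    have : mkk ε = mkk 1 := by
      rw [Ideal.Quotient.eq]
      exact Ideal.mem_span_singleton.mpr ⟨-1, by ring⟩
    rw [this, map_one]
  have hlam1 : lam 1 = ψ ε := by rw [← hmkε, hlam, hidem]
  have hll : ∀ k l, lam k * lam l = lam (k * l) := by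
    intro k l
    obtain ⟨y, rfl⟩ := hmksurj k
    obtain ⟨y', rfl⟩ := hmksurj l
    have h1 : mkk y * mkk y' = mkk (y * y') := (map_mul mkk y y').symm
    rw [h1, hlam, hlam, hlam, ← map_mul]
    congr 1
    calc (ε * y) * (ε * y') = (ε * ε) * (y * y') := by ring
    _ = ε * (y * y') := by rw [hidem]
  have hllz : ∀ k l z, lam k * (lam l * z) = lam (k * l) * z := fun k l z => by
    rw [← mul_assoc, hll]
  have hlvl : ∀ k l, lam k * (V * lam l) = 0 := by
    intro k l
    obtain ⟨y, rfl⟩ := hmksurj k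
    obtain ⟨y', rfl⟩ := hmksurj l
    rw [hlam, hlam]
    have hVψ : V * ψ (ε * y') = ψ (σ (ε * y')) * V := by
      rw [← hconj (ε * y'), mul_assoc, mul_assoc, hVV, mul_one]
    rw [hVψ, ← mul_assoc, ← map_mul]
    have h0 : ε * y * σ (ε * y') = 0 := by
      rw [map_mul]
      calc ε * y * (σ ε * σ y') = (ε * σ ε) * (y * σ y') := by ring
      _ = 0 := by rw [horth, zero_mul]
    rw [h0, map_zero, zero_mul]
  have hlvlz : ∀ k l z, lam k * (V * (lam l * z)) = 0 := by
    intro k l z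
    calc lam k * (V * (lam l * z)) = (lam k * (V * lam l)) * z := by
          rw [mul_assoc, mul_assoc]
    _ = 0 := by rw [hlvl, zero_mul]
  have hladd : ∀ k l, lam (k + l) = lam k + lam l := by
    intro k l
    obtain ⟨y, rfl⟩ := hmksurj k
    obtain ⟨y', rfl⟩ := hmksurj l
    have h1 : mkk y + mkk y' = mkk (y + y') := (map_add mkk y y').symm
    rw [h1, hlam, hlam, hlam, mul_add, map_add]
  have hmksmul : ∀ (c : F) (y : AdjoinRoot (X ^ n - 1 : F[X])), mkk (c • y) = c • mkk y := by
    intro c y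
    rw [Algebra.smul_def, Algebra.smul_def, map_mul]
    congr 1
  have hlsmul : ∀ (c : F) k, lam (c • k) = c • lam k := by
    intro c k
    obtain ⟨y, rfl⟩ := hmksurj k
    rw [← hmksmul]
    simp only [hlam]
    rw [mul_smul_comm, map_smul]
  -- idempotency of e + ebar
  have hψεσ : ψ ε * ψ (σ ε) = 0 := by rw [← map_mul, horth, map_zero]
  have hψσε : ψ (σ ε) * ψ ε = 0 := by
    rw [← map_mul, mul_comm, horth, map_zero]
  have hψε2 : ψ ε * ψ ε = ψ ε := by rw [← map_mul, hidem]
  have hψσ2 : ψ (σ ε) * ψ (σ ε) = ψ (σ ε) := by rw [← map_mul, hidemσ]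
  have hidemη : IsIdempotentElem (ψ ε + ψ (σ ε)) := by
    show (ψ ε + ψ (σ ε)) * (ψ ε + ψ (σ ε)) = ψ ε + ψ (σ ε)
    calc (ψ ε + ψ (σ ε)) * (ψ ε + ψ (σ ε))
        = ψ ε * ψ ε + ψ (σ ε) * ψ ε + (ψ ε * ψ (σ ε) + ψ (σ ε) * ψ (σ ε)) := by
          rw [add_mul, mul_add, mul_add]; abel
      _ = ψ ε + ψ (σ ε) := by rw [hψε2, hψσ2, hψεσ, hψσε]; abel
  -- centrality of e + ebar
  have hψψ : ∀ a b, ψ a * ψ b = ψ b * ψ a := fun a b => by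
    rw [← map_mul, ← map_mul, mul_comm]
  have hη : ψ ε + ψ (σ ε) = ψ (ε + σ ε) := (map_add ψ ε (σ ε)).symm
  have hηV : V * ψ (ε + σ ε) * V = ψ (ε + σ ε) := by
    rw [hconj, map_add, hσσ, add_comm]
  have hcommV : V * ψ (ε + σ ε) = ψ (ε + σ ε) * V := by
    have h2 := congrArg (fun w => w * V) hηV
    simpa only [mul_assoc, hVV, mul_one] using h2
  have hr : ∀ m : ℕ, MonoidAlgebra.of F (DihedralGroup n) (DihedralGroup.r ((m : ℕ) : ZMod n))
      = ψ (AdjoinRoot.root (X ^ n - 1 : F[X]) ^ m) := by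
    intro m
    rw [map_pow, hψ, ← map_pow, DihedralGroup.r_one_pow]
  have hcommg : ∀ g : DihedralGroup n,
      ψ (ε + σ ε) * MonoidAlgebra.of F (DihedralGroup n) g
        = MonoidAlgebra.of F (DihedralGroup n) g * ψ (ε + σ ε) := by
    intro g
    cases g with
    | r i =>
      have h1 : (DihedralGroup.r i : DihedralGroup n)
          = DihedralGroup.r ((i.val : ℕ) : ZMod n) := by
        rw [ZMod.natCast_rightInverse i]
      rw [h1, hr, hψψ]
    | sr i =>
      have h1 : (DihedralGroup.sr i : DihedralGroup n)
          = DihedralGroup.sr 0 * DihedralGroup.r i := by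
        rw [DihedralGroup.sr_mul_r, zero_add]
      have h2 : (DihedralGroup.r i : DihedralGroup n)
          = DihedralGroup.r ((i.val : ℕ) : ZMod n) := by
        rw [ZMod.natCast_rightInverse i]
      rw [h1, map_mul, h2, hr, ← hVdef, ← mul_assoc, ← hcommV, mul_assoc, hψψ, ← mul_assoc]
  have hcomm : ∀ z : MonoidAlgebra F (DihedralGroup n),
      (ψ ε + ψ (σ ε)) * z = z * (ψ ε + ψ (σ ε)) := by
    intro z
    rw [hη]
    induction z using MonoidAlgebra.induction_on with
    | of g => exact hcommg g
    | add f g hf hg => rw [mul_add, add_mul, hf, hg]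
    | smul c f hf => rw [mul_smul_comm, smul_mul_assoc, hf]
  -- injectivity of ψ
  have hψinj : Function.Injective ψ := by
    have key : ∀ z, ψ z = 0 → z = 0 := by
      intro z hz
      obtain ⟨g, rfl⟩ := AdjoinRoot.mk_surjective z
      set g' := g %ₘ (X ^ n - 1 : F[X]) with hg'
      have hgg' : AdjoinRoot.mk (X ^ n - 1 : F[X]) g = AdjoinRoot.mk _ g' := by
        rw [AdjoinRoot.mk_eq_mk, hg', Polynomial.modByMonic_eq_sub_mul_div _ (X ^ n - 1 : F[X])]
        exact ⟨g /ₘ (X ^ n - 1 : F[X]), by ring⟩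
      rw [hgg'] at hz ⊢
      by_cases hg0 : g' = 0
      · rw [hg0, map_zero]
      exfalso
      have hdeg : g'.degree < (X ^ n - 1 : F[X]).degree :=
        Polynomial.degree_modByMonic_lt g hmonic
      have hdegn : (X ^ n - 1 : F[X]).degree = (n : ℕ) := by
        simpa using Polynomial.degree_X_pow_sub_C (by omega : 0 < n) (1 : F)
      have hnat : g'.natDegree < n := by
        rw [hdegn] at hdeg
        exact (Polynomial.natDegree_lt_iff_degree_lt hg0).mpr hdeg
      have hmkaeval : ψ (AdjoinRoot.mk (X ^ n - 1 : F[X]) g')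
          = Polynomial.aeval (MonoidAlgebra.of F (DihedralGroup n) (DihedralGroup.r 1)) g' := by
        rw [← AdjoinRoot.aeval_eq, ← hψ]
        exact (Polynomial.aeval_algHom_apply ψ _ g').symm
      rw [hmkaeval, Polynomial.aeval_eq_sum_range' hnat] at hz
      have hU : ∀ i : ℕ, (MonoidAlgebra.of F (DihedralGroup n) (DihedralGroup.r 1)) ^ i
          = MonoidAlgebra.single (DihedralGroup.r ((i : ℕ) : ZMod n)) (1 : F) := by
        intro i
        rw [← map_pow, DihedralGroup.r_one_pow, MonoidAlgebra.of_apply]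
      simp only [hU, MonoidAlgebra.smul_single', mul_one] at hz
      apply hg0
      apply Polynomial.ext
      intro j
      rw [Polynomial.coeff_zero]
      by_cases hj : j < n
      · have hz' : (∑ x ∈ Finset.range n, Finsupp.single
            (DihedralGroup.r ((x : ℕ) : ZMod n)) (g'.coeff x) : DihedralGroup n →₀ F) = 0 := by
          have := congrArg MonoidAlgebra.coeff hz
          simpa only [MonoidAlgebra.coeff_sum, MonoidAlgebra.coeff_single,
            MonoidAlgebra.coeff_zero] using this
        have happ := congrArg (fun w : DihedralGroup n →₀ F =>
          w (DihedralGroup.r ((j : ℕ) : ZMod n))) hz'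
        simp only [Finset.sum_apply', Finsupp.coe_zero, Pi.zero_apply] at happ
        rw [Finset.sum_eq_single_of_mem j (Finset.mem_range.mpr hj)] at happ
        · rwa [Finsupp.single_apply, if_pos rfl] at happ
        · intro i hi hij
          rw [Finsupp.single_apply, if_neg]
          intro hri
          apply hij
          simp only [DihedralGroup.r.injEq] at hri
          have hval := congrArg ZMod.val hri
          rwa [ZMod.val_cast_of_lt (Finset.mem_range.mp hi), ZMod.val_cast_of_lt hj] at hval
      · exact Polynomial.coeff_eq_zero_of_natDegree_lt (lt_of_lt_of_le hnat (not_lt.mp hj))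
    intro a b hab
    have h0 : a - b = 0 := key _ (by rw [map_sub, hab, sub_self])
    exact sub_eq_zero.mp h0
  have hlaminj : ∀ k, lam k = 0 → k = 0 := by
    intro k hk
    obtain ⟨y, rfl⟩ := hmksurj k
    rw [hlam] at hk
    have h1 : ε * y = 0 := hψinj (by rw [hk, map_zero])
    rw [Ideal.Quotient.eq_zero_iff_mem]
    exact Ideal.mem_span_singleton.mpr ⟨y, by rw [sub_mul, one_mul, h1, sub_zero]⟩
  -- finiteness of K
  haveI hModFin : Module.Finite F (AdjoinRoot (X ^ n - 1 : F[X])) :=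
    (AdjoinRoot.powerBasis hmonic.ne_zero).finite
  haveI hRFin : Finite (AdjoinRoot (X ^ n - 1 : F[X])) := Module.finite_of_finite F
  have hKFin : Finite (AdjoinRoot (X ^ n - 1 : F[X]) ⧸ Ideal.span {1 - ε}) :=
    Finite.of_surjective _ hmksurj
  haveI := hKFin
  -- K is nontrivial
  have hK10 : (1 : AdjoinRoot (X ^ n - 1 : F[X]) ⧸ Ideal.span {1 - ε}) ≠ 0 := by
    intro h1
    have hmem : (1 : AdjoinRoot (X ^ n - 1 : F[X])) ∈ Ideal.span {1 - ε} := by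
      rw [← Ideal.Quotient.eq_zero_iff_mem, map_one]; exact h1
    obtain ⟨w, hw⟩ := Ideal.mem_span_singleton.mp hmem
    apply hε0
    calc ε = ε * ((1 - ε) * w) := by rw [← hw, mul_one]
    _ = (ε - ε * ε) * w := by ring
    _ = 0 := by rw [hidem, sub_self, zero_mul]
  -- R is reduced
  have hRred : ∀ (z : AdjoinRoot (X ^ n - 1 : F[X])) (m : ℕ), z ^ m = 0 → z = 0 := by
    intro z m hzm
    obtain ⟨g, rfl⟩ := AdjoinRoot.mk_surjective z
    rw [← map_pow, AdjoinRoot.mk_eq_zero] at hzm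
    rw [AdjoinRoot.mk_eq_zero]
    exact hsqf.isRadical m g hzm
  have hεmul : ∀ (y : AdjoinRoot (X ^ n - 1 : F[X])), ε * (ε * y) = ε * y := fun y => by
    rw [← mul_assoc, hidem]
  have hKlift : ∀ kk : AdjoinRoot (X ^ n - 1 : F[X]) ⧸ Ideal.span {1 - ε},
      ∃ z : AdjoinRoot (X ^ n - 1 : F[X]), ε * z = z ∧ mkk z = kk := by
    intro kk
    obtain ⟨y, rfl⟩ := hmksurj kk
    refine ⟨ε * y, hεmul y, ?_⟩
    rw [Ideal.Quotient.eq]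
    exact Ideal.mem_span_singleton.mpr ⟨-y, by ring⟩
  -- K is reduced
  have hKred : ∀ (x : AdjoinRoot (X ^ n - 1 : F[X]) ⧸ Ideal.span {1 - ε}) (m : ℕ),
      x ^ m = 0 → x = 0 := by
    intro x m hx
    obtain ⟨z, hz1, rfl⟩ := hKlift x
    rcases m with _ | m
    · rw [pow_zero] at hx; exact absurd hx hK10
    · have hmem : z ^ (m + 1) ∈ Ideal.span {1 - ε} := by
        rw [← Ideal.Quotient.eq_zero_iff_mem, map_pow]
        exact hx
      obtain ⟨w, hw⟩ := Ideal.mem_span_singleton.mp hmem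
      have hεzp : ε * z ^ (m + 1) = z ^ (m + 1) := by
        rw [pow_succ', ← mul_assoc, hz1]
      have hz0 : z ^ (m + 1) = 0 := by
        rw [← hεzp, hw]
        calc ε * ((1 - ε) * w) = (ε - ε * ε) * w := by ring
        _ = 0 := by rw [hidem, sub_self, zero_mul]
      rw [hRred z (m + 1) hz0, map_zero]
  -- K has only trivial idempotents
  have hKidem : ∀ f : AdjoinRoot (X ^ n - 1 : F[X]) ⧸ Ideal.span {1 - ε},
      f * f = f → f ≠ 0 → f = 1 := by
    intro f hf hf0
    obtain ⟨z, hz1, rfl⟩ := hKlift f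
    have hmem : z * z - z ∈ Ideal.span {1 - ε} := by
      rw [← Ideal.Quotient.eq_zero_iff_mem, map_sub, map_mul, hf, sub_self]
    obtain ⟨w, hw⟩ := Ideal.mem_span_singleton.mp hmem
    have hzz : z * z = z := by
      have h1 : ε * (z * z - z) = z * z - z := by rw [mul_sub, ← mul_assoc, hz1]
      have h2 : z * z - z = 0 := by
        rw [← h1, hw]
        calc ε * ((1 - ε) * w) = (ε - ε * ε) * w := by ring
        _ = 0 := by rw [hidem, sub_self, zero_mul]
      rwa [sub_eq_zero] at h2
    have hz0 : z ≠ 0 := fun h => hf0 (by rw [h, map_zero])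
    by_cases hez : ε - z = 0
    · have hεz : ε = z := by rwa [sub_eq_zero] at hez
      rw [← hεz, hmkε]
    · exfalso
      apply hprim'
      refine ⟨z, ε - z, hzz, ?_, hz0, hez, ?_, by ring⟩
      · show (ε - z) * (ε - z) = ε - z
        calc (ε - z) * (ε - z) = ε * ε - ε * z - z * ε + z * z := by ring
        _ = ε - z - z + z := by rw [hidem, hz1, hzz, mul_comm z ε, hz1]
        _ = ε - z := by ring
      · show z * (ε - z) = 0
        calc z * (ε - z) = z * ε - z * z := by ring
        _ = 0 := by rw [mul_comm z ε, hz1, hzz, sub_self]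
  -- K is a field
  have hKfield : IsField (AdjoinRoot (X ^ n - 1 : F[X]) ⧸ Ideal.span {1 - ε}) := by
    refine ⟨⟨0, 1, fun h => hK10 h.symm⟩, mul_comm, ?_⟩
    intro a ha
    obtain ⟨m, hm0, hmid⟩ := exists_idem_pow a
    have ham : a ^ m ≠ 0 := fun h => ha (hKred a m h)
    have h1 : a ^ m = 1 := hKidem _ hmid ham
    refine ⟨a ^ (m - 1), ?_⟩
    have h2 : a * a ^ (m - 1) = a ^ m := by
      rw [← pow_succ']
      congr 1
      omega
    rw [h2, h1]
  -- the map Phi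
  set Phi0 : Matrix (Fin 2) (Fin 2) (AdjoinRoot (X ^ n - 1 : F[X]) ⧸ Ideal.span {1 - ε}) →
      MonoidAlgebra F (DihedralGroup n) :=
    fun M => lam (M 0 0) + lam (M 0 1) * V + V * lam (M 1 0) + V * (lam (M 1 1) * V)
    with hPhi0
  have hPhiAdd : ∀ M N, Phi0 (M + N) = Phi0 M + Phi0 N := by
    intro M N
    simp only [hPhi0, Matrix.add_apply, hladd, add_mul, mul_add]
    abel
  have hPhiSmul : ∀ (c : F) M, Phi0 (c • M) = c • Phi0 M := by
    intro c M
    simp only [hPhi0, Matrix.smul_apply, hlsmul, smul_mul_assoc, mul_smul_comm, smul_add]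
  set Φ : Matrix (Fin 2) (Fin 2) (AdjoinRoot (X ^ n - 1 : F[X]) ⧸ Ideal.span {1 - ε})
      →ₗ[F] MonoidAlgebra F (DihedralGroup n) :=
    { toFun := Phi0
      map_add' := hPhiAdd
      map_smul' := hPhiSmul } with hΦdef
  have hΦapp : ∀ M, Φ M = Phi0 M := fun _ => rfl
  -- multiplicativity
  have hPhiMul : ∀ M N, Phi0 (M * N) = Phi0 M * Phi0 N := by
    intro M N
    simp only [hPhi0, Matrix.mul_apply, Fin.sum_univ_two, hladd, add_mul, mul_add, mul_assoc,
      hVV2, hVV, hll, hllz, hlvl, hlvlz, mul_zero, zero_mul, add_zero, zero_add, mul_one,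
      one_mul]
    abel
  -- Phi at the identity
  have hPhiOne : Phi0 1 = ψ ε + ψ (σ ε) := by
    have h00 : (1 : Matrix (Fin 2) (Fin 2)
        (AdjoinRoot (X ^ n - 1 : F[X]) ⧸ Ideal.span {1 - ε})) 0 0 = 1 := Matrix.one_apply_eq 0
    have h11 : (1 : Matrix (Fin 2) (Fin 2)
        (AdjoinRoot (X ^ n - 1 : F[X]) ⧸ Ideal.span {1 - ε})) 1 1 = 1 := Matrix.one_apply_eq 1
    have h01 : (1 : Matrix (Fin 2) (Fin 2)
        (AdjoinRoot (X ^ n - 1 : F[X]) ⧸ Ideal.span {1 - ε})) 0 1 = 0 :=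
      Matrix.one_apply_ne (by decide)
    have h10 : (1 : Matrix (Fin 2) (Fin 2)
        (AdjoinRoot (X ^ n - 1 : F[X]) ⧸ Ideal.span {1 - ε})) 1 0 = 0 :=
      Matrix.one_apply_ne (by decide)
    simp only [hPhi0, h00, h01, h10, h11, hlam0, hlam1, zero_mul, mul_zero, add_zero, zero_add]
    rw [← mul_assoc, hconj]
  -- bar map
  have hbarlam : ∀ k, barFG (lam k) = V * (lam k * V) := by
    intro k
    obtain ⟨y, rfl⟩ := hmksurj k
    simp only [hlam]
    rw [hbarψ, ← hconj, mul_assoc]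
  have hbarV : barFG V = V := by
    rw [hVdef, MonoidAlgebra.of_apply, barFG_single]
    rfl
  have hbarPhi : ∀ a b c d, barFG (Phi0 !![a, b; c, d]) = Phi0 !![d, b; c, a] := by
    intro a b c d
    simp only [hPhi0, Matrix.cons_val', Matrix.cons_val_zero, Matrix.cons_val_one,
      Matrix.head_cons, Matrix.empty_val', Matrix.cons_val_fin_one, Matrix.head_fin_const, Matrix.of_apply]
    simp only [barFG_add, barFG_mul, hbarV, hbarlam]
    simp only [mul_assoc, hVV2, hVV, mul_one]
    abel
  -- extraction lemmas for injectivity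
  have hx00 : ∀ M, lam 1 * (Phi0 M * lam 1) = lam (M 0 0) := by
    intro M
    simp only [hPhi0, add_mul, mul_add, mul_assoc, hVV2, hVV, hll, hllz, hlvl, hlvlz,
      mul_zero, zero_mul, add_zero, zero_add, mul_one, one_mul]
  have hx01 : ∀ M, lam 1 * ((Phi0 M * V) * lam 1) = lam (M 0 1) := by
    intro M
    simp only [hPhi0, add_mul, mul_add, mul_assoc, hVV2, hVV, hll, hllz, hlvl, hlvlz,
      mul_zero, zero_mul, add_zero, zero_add, mul_one, one_mul]
  have hx10 : ∀ M, lam 1 * ((V * Phi0 M) * lam 1) = lam (M 1 0) := by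
    intro M
    simp only [hPhi0, add_mul, mul_add, mul_assoc, hVV2, hVV, hll, hllz, hlvl, hlvlz,
      mul_zero, zero_mul, add_zero, zero_add, mul_one, one_mul]
  have hx11 : ∀ M, lam 1 * ((V * (Phi0 M * V)) * lam 1) = lam (M 1 1) := by
    intro M
    simp only [hPhi0, add_mul, mul_add, mul_assoc, hVV2, hVV, hll, hllz, hlvl, hlvlz,
      mul_zero, zero_mul, add_zero, zero_add, mul_one, one_mul]
  have hPhi0zero : ∀ M, Phi0 M = 0 → M = 0 := by
    intro M hM
    have h00 := hx00 M; have h01 := hx01 M; have h10 := hx10 M; have h11 := hx11 M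
    rw [hM] at h00 h01 h10 h11
    simp only [mul_zero, zero_mul] at h00 h01 h10 h11
    ext i j
    rw [Matrix.zero_apply]
    fin_cases i <;> fin_cases j
    · exact hlaminj _ h00.symm
    · exact hlaminj _ h01.symm
    · exact hlaminj _ h10.symm
    · exact hlaminj _ h11.symm
  have hPhiInj : Function.Injective Φ := by
    intro M N h
    have h2 : Phi0 (M - N) = 0 := by
      have h3 : Phi0 (M - N) = Phi0 M - Phi0 N := Φ.map_sub M N
      have h4 : Phi0 M = Phi0 N := h
      rw [h3, h4, sub_self]
    have := hPhi0zero _ h2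
    rwa [sub_eq_zero] at this
  -- range
  have hswap : ∀ M, V * Phi0 M = Phi0 !![M 1 0, M 1 1; M 0 0, M 0 1] := by
    intro M
    simp only [hPhi0, Matrix.cons_val', Matrix.cons_val_zero, Matrix.cons_val_one,
      Matrix.head_cons, Matrix.empty_val', Matrix.cons_val_fin_one, Matrix.head_fin_const, Matrix.of_apply,
      mul_add, mul_assoc, hVV2]
    abel
  have hex_r : ∀ m : ℕ, ∃ M, Phi0 M
      = ψ (AdjoinRoot.root (X ^ n - 1 : F[X]) ^ m) * (ψ ε + ψ (σ ε)) := by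
    intro m
    refine ⟨!![mkk (AdjoinRoot.root (X ^ n - 1 : F[X]) ^ m), 0; 0,
      mkk (σ (AdjoinRoot.root (X ^ n - 1 : F[X]) ^ m))], ?_⟩
    have h3 : V * (ψ (ε * σ (AdjoinRoot.root (X ^ n - 1 : F[X]) ^ m)) * V)
        = ψ (σ ε * AdjoinRoot.root (X ^ n - 1 : F[X]) ^ m) := by
      rw [← mul_assoc, hconj, map_mul, hσσ]
    simp only [hPhi0, Matrix.cons_val', Matrix.cons_val_zero, Matrix.cons_val_one,
      Matrix.head_cons, Matrix.empty_val', Matrix.cons_val_fin_one, Matrix.head_fin_const, Matrix.of_apply,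
      hlam, hlam0, zero_mul, mul_zero, add_zero, zero_add]
    rw [h3, mul_add, ← map_mul, ← map_mul, mul_comm ε (AdjoinRoot.root (X ^ n - 1 : F[X]) ^ m),
      mul_comm (σ ε) (AdjoinRoot.root (X ^ n - 1 : F[X]) ^ m)]
  have hex : ∀ z, ∃ M, Phi0 M = z * (ψ ε + ψ (σ ε)) := by
    intro z
    induction z using MonoidAlgebra.induction_on with
    | of g =>
      cases g with
      | r i =>
        obtain ⟨M, hM⟩ := hex_r i.val
        refine ⟨M, ?_⟩
        have h2 : (DihedralGroup.r i : DihedralGroup n)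
            = DihedralGroup.r ((i.val : ℕ) : ZMod n) := by
          rw [ZMod.natCast_rightInverse i]
        rw [h2, hr, hM]
      | sr i =>
        obtain ⟨M, hM⟩ := hex_r i.val
        refine ⟨!![M 1 0, M 1 1; M 0 0, M 0 1], ?_⟩
        have h1 : (DihedralGroup.sr i : DihedralGroup n)
            = DihedralGroup.sr 0 * DihedralGroup.r i := by
          rw [DihedralGroup.sr_mul_r, zero_add]
        have h2 : (DihedralGroup.r i : DihedralGroup n)
            = DihedralGroup.r ((i.val : ℕ) : ZMod n) := by
          rw [ZMod.natCast_rightInverse i]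
        rw [← hswap, hM, h1, map_mul, h2, hr, ← hVdef, mul_assoc]
    | add f g hf hg =>
      obtain ⟨M, hM⟩ := hf
      obtain ⟨N, hN⟩ := hg
      exact ⟨M + N, by rw [hPhiAdd, hM, hN, add_mul]⟩
    | smul c f hf =>
      obtain ⟨M, hM⟩ := hf
      exact ⟨c • M, by rw [hPhiSmul, hM, smul_mul_assoc]⟩
  have hrange : Set.range Φ = Set.range (fun z : MonoidAlgebra F (DihedralGroup n) =>
      z * (ψ ε + ψ (σ ε))) := by
    apply Set.eq_of_subset_of_subset
    · rintro x ⟨M, rfl⟩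
      refine ⟨Phi0 M, ?_⟩
      show Phi0 M * (ψ ε + ψ (σ ε)) = Φ M
      rw [← hPhiOne, ← hPhiMul, mul_one, hΦapp]
    · rintro x ⟨z, rfl⟩
      obtain ⟨M, hM⟩ := hex z
      exact ⟨M, by rw [hΦapp, hM]⟩
  exact ⟨⟨hidemη, hcomm⟩, hKFin, hKfield, Φ, hPhiInj,
    by rw [hΦapp, hPhiOne], fun M N => by rw [hΦapp, hΦapp, hΦapp, hPhiMul],
    hrange, fun a b c d => by rw [hΦapp, hΦapp, hbarPhi]⟩

end CDC
end
end
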